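/- arXiv:1601.08141 — 6 statements merged into one kernel-verified Lean document; each statement's English description precedes it below -/
import Mathlib

section
/- For any compact set M of d×d real matrices and any positive integer t, the pointwise stabilization radius satisfies ρ̃(M^t) = ρ̃(M)^t, where M^t denotes the set of all products of exactly t matrices from M. -/
open Matrix Filter

noncomputable section

/-- Discrete-time switched trajectory: x(t) = A_{σ(t)} ⋯ A_{σ(1)} x. -/
def traj {d : ℕ} (σ : ℕ → Matrix (Fin d) (Fin d) ℝ) (x : EuclideanSpace ℝ (Fin d)) :
    ℕ → EuclideanSpace ℝ (Fin d)
  | 0 => x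
  | t + 1 => (WithLp.toLp 2 ((σ (t + 1)).mulVec (traj σ x t)) : EuclideanSpace ℝ (Fin d))

/-- Pointwise stabilization radius at x. -/
def stabRadAt {d : ℕ} (M : Set (Matrix (Fin d) (Fin d) ℝ)) (x : EuclideanSpace ℝ (Fin d)) : ℝ :=
  sInf {lam : ℝ | 0 ≤ lam ∧ ∃ σ : ℕ → Matrix (Fin d) (Fin d) ℝ, (∀ t, σ t ∈ M) ∧
    ∃ C > 0, ∀ t : ℕ, ‖traj σ x t‖ ≤ C * lam ^ t * ‖x‖}

/-- Pointwise stabilization radius. -/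
def stabRad {d : ℕ} (M : Set (Matrix (Fin d) (Fin d) ℝ)) : ℝ :=
  ⨆ x : EuclideanSpace ℝ (Fin d), stabRadAt M x

/-- The set of products of exactly t matrices from M. -/
def prodSet {d : ℕ} (M : Set (Matrix (Fin d) (Fin d) ℝ)) (t : ℕ) :
    Set (Matrix (Fin d) (Fin d) ℝ) :=
  {P | ∃ A : Fin t → Matrix (Fin d) (Fin d) ℝ, (∀ i, A i ∈ M) ∧ P = (List.ofFn A).prod}

namespace StabAux

/-- The admissible exponent set. -/
def S {d : ℕ} (M : Set (Matrix (Fin d) (Fin d) ℝ)) (x : EuclideanSpace ℝ (Fin d)) : Set ℝ :=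
  {lam : ℝ | 0 ≤ lam ∧ ∃ σ : ℕ → Matrix (Fin d) (Fin d) ℝ, (∀ t, σ t ∈ M) ∧
    ∃ C > 0, ∀ t : ℕ, ‖traj σ x t‖ ≤ C * lam ^ t * ‖x‖}

lemma stabRadAt_eq {d : ℕ} (M : Set (Matrix (Fin d) (Fin d) ℝ)) (x) :
    stabRadAt M x = sInf (S M x) := rfl

/-- `mulVec` as a map on Euclidean space. -/
def mvE {d : ℕ} (A : Matrix (Fin d) (Fin d) ℝ) (v : EuclideanSpace ℝ (Fin d)) :
    EuclideanSpace ℝ (Fin d) := WithLp.toLp 2 (A.mulVec v)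

variable {d : ℕ} {M : Set (Matrix (Fin d) (Fin d) ℝ)}

lemma S_bddBelow (x : EuclideanSpace ℝ (Fin d)) : BddBelow (S M x) :=
  ⟨0, fun _ hy => hy.1⟩

lemma stabRadAt_nonneg (x : EuclideanSpace ℝ (Fin d)) : 0 ≤ stabRadAt M x :=
  Real.sInf_nonneg fun _ hy => hy.1

lemma traj_succ (σ) (x : EuclideanSpace ℝ (Fin d)) (n : ℕ) :
    traj σ x (n + 1) = mvE (σ (n + 1)) (traj σ x n) := rfl

lemma mvE_mul (A B : Matrix (Fin d) (Fin d) ℝ) (v : EuclideanSpace ℝ (Fin d)) :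
    mvE (A * B) v = mvE A (mvE B v) := by
  unfold mvE
  exact congrArg (WithLp.toLp 2) (mulVec_mulVec _ A B).symm

lemma traj_add (σ) (x : EuclideanSpace ℝ (Fin d)) (m k : ℕ) :
    traj σ x (m + k) =
      mvE ((List.ofFn fun i : Fin k => σ (m + k - (i : ℕ))).prod) (traj σ x m) := by
  induction k with
  | zero => simp [mvE, one_mulVec]
  | succ k ih =>
    have h1 : traj σ x (m + (k + 1)) = mvE (σ (m + k + 1)) (traj σ x (m + k)) := rfl
    have hlist : (List.ofFn fun i : Fin (k+1) => σ (m + (k+1) - (i:ℕ))).prod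
        = σ (m + k + 1) * (List.ofFn fun i : Fin k => σ (m + k - (i:ℕ))).prod := by
      have h2 : ∀ i : Fin k, σ (m + (k+1) - ((i.succ : Fin (k+1)) : ℕ)) = σ (m + k - (i:ℕ)) :=
        fun i => congrArg σ (by simp only [Fin.val_succ]; omega)
      simp only [List.ofFn_succ, List.prod_cons, h2]
      congr 2
    rw [h1, ih, hlist, mvE_mul]

lemma traj_le {K : ℝ} (hK0 : 0 ≤ K)
    (hK : ∀ A ∈ M, ∀ v : EuclideanSpace ℝ (Fin d), ‖mvE A v‖ ≤ K * ‖v‖)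
    (σ) (hσ : ∀ n, σ n ∈ M) (x : EuclideanSpace ℝ (Fin d)) (m k : ℕ) :
    ‖traj σ x (m + k)‖ ≤ K ^ k * ‖traj σ x m‖ := by
  induction k with
  | zero => simp
  | succ k ih =>
    calc ‖traj σ x (m + (k+1))‖
        = ‖mvE (σ (m+k+1)) (traj σ x (m+k))‖ := rfl
      _ ≤ K * ‖traj σ x (m+k)‖ := hK _ (hσ _) _
      _ ≤ K * (K ^ k * ‖traj σ x m‖) := mul_le_mul_of_nonneg_left ih hK0
      _ = K ^ (k+1) * ‖traj σ x m‖ := by ring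

lemma exists_K (hM : IsCompact M) (hne : M.Nonempty) :
    ∃ K : ℝ, 1 ≤ K ∧ ∀ A ∈ M, ∀ v : EuclideanSpace ℝ (Fin d), ‖mvE A v‖ ≤ K * ‖v‖ := by
  set L : Matrix (Fin d) (Fin d) ℝ →ₗ[ℝ]
      (EuclideanSpace ℝ (Fin d) →L[ℝ] EuclideanSpace ℝ (Fin d)) :=
    { toFun := fun A => Matrix.toEuclideanCLM (𝕜 := ℝ) A,
      map_add' := fun a b => map_add _ a b,
      map_smul' := fun c a => map_smul _ c a } with hLdef
  have hcont : Continuous (fun A : Matrix (Fin d) (Fin d) ℝ => ‖L A‖) :=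
    (LinearMap.continuous_of_finiteDimensional L).norm
  obtain ⟨A0, hA0, hmax⟩ := hM.exists_isMaxOn hne hcont.continuousOn
  refine ⟨max ‖L A0‖ 1, le_max_right _ _, ?_⟩
  intro A hA v
  have h1 : mvE A v = L A v := by rw [hLdef]; rfl
  rw [h1]
  calc ‖L A v‖ ≤ ‖L A‖ * ‖v‖ := (L A).le_opNorm v
    _ ≤ max ‖L A0‖ 1 * ‖v‖ :=
        mul_le_mul_of_nonneg_right ((hmax hA).trans (le_max_left _ _)) (norm_nonneg v)

lemma K_mem {K : ℝ} (hK0 : 0 ≤ K)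
    (hK : ∀ A ∈ M, ∀ v : EuclideanSpace ℝ (Fin d), ‖mvE A v‖ ≤ K * ‖v‖)
    {A0} (hA0 : A0 ∈ M) (x : EuclideanSpace ℝ (Fin d)) : K ∈ S M x := by
  refine ⟨hK0, fun _ => A0, fun _ => hA0, 1, one_pos, fun n => ?_⟩
  rw [one_mul]
  induction n with
  | zero => simp [traj]
  | succ n ih =>
    calc ‖traj (fun _ => A0) x (n+1)‖
        = ‖mvE A0 (traj (fun _ => A0) x n)‖ := rfl
      _ ≤ K * ‖traj (fun _ => A0) x n‖ := hK _ hA0 _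
      _ ≤ K * (K ^ n * ‖x‖) := mul_le_mul_of_nonneg_left ih hK0
      _ = K ^ (n+1) * ‖x‖ := by ring

def blockProd (σ : ℕ → Matrix (Fin d) (Fin d) ℝ) (t : ℕ) (s : ℕ) :
    Matrix (Fin d) (Fin d) ℝ :=
  (List.ofFn fun i : Fin t => σ (t * (s - 1) + t - (i : ℕ))).prod

lemma blockProd_mem {σ} (hσ : ∀ n, σ n ∈ M) (t s : ℕ) : blockProd σ t s ∈ prodSet M t :=
  ⟨_, fun _ => hσ _, rfl⟩

lemma traj_blockProd (σ) (x : EuclideanSpace ℝ (Fin d)) (t : ℕ) :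
    ∀ s, traj (blockProd σ t) x s = traj σ x (t * s) := by
  intro s
  induction s with
  | zero => rfl
  | succ s ih =>
    have h1 : traj (blockProd σ t) x (s+1)
        = mvE (blockProd σ t (s+1)) (traj (blockProd σ t) x s) := rfl
    have h2 : t * (s+1) = t * s + t := by ring
    rw [h1, ih, h2, traj_add]
    rfl

lemma pow_mem_S {x : EuclideanSpace ℝ (Fin d)} {lam : ℝ} (t : ℕ) (hlam : lam ∈ S M x) :
    lam ^ t ∈ S (prodSet M t) x := by
  obtain ⟨h0, σ, hσ, C, hC, hb⟩ := hlam
  refine ⟨pow_nonneg h0 t, blockProd σ t, fun s => blockProd_mem hσ t s, C, hC, fun s => ?_⟩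
  rw [traj_blockProd, ← pow_mul]
  exact hb (t * s)

def unblock {t : ℕ} (ht : 0 < t) (F : ℕ → Fin t → Matrix (Fin d) (Fin d) ℝ) :
    ℕ → Matrix (Fin d) (Fin d) ℝ :=
  fun n => F ((n - 1) / t + 1) ⟨t - 1 - (n - 1) % t, by omega⟩

lemma unblock_eq {t : ℕ} (ht : 0 < t) (F : ℕ → Fin t → Matrix (Fin d) (Fin d) ℝ)
    (s : ℕ) (i : Fin t) : unblock ht F (t * s + t - (i : ℕ)) = F (s + 1) i := by
  unfold unblock
  have hi := i.isLt
  have h1 : t * s + t - (i : ℕ) - 1 = t * s + (t - 1 - (i : ℕ)) := by omega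
  simp only [h1, Nat.mul_add_div ht, Nat.mul_add_mod,
    Nat.div_eq_of_lt (show t - 1 - (i:ℕ) < t by omega),
    Nat.mod_eq_of_lt (show t - 1 - (i:ℕ) < t by omega)]
  refine congr (congrArg F (by omega))
    (Fin.ext (show t - 1 - (t - 1 - (i:ℕ)) = (i:ℕ) by omega))

lemma ungroup {t : ℕ} (ht : 0 < t) {K : ℝ} (hK1 : 1 ≤ K)
    (hK : ∀ A ∈ M, ∀ v : EuclideanSpace ℝ (Fin d), ‖mvE A v‖ ≤ K * ‖v‖)
    {x : EuclideanSpace ℝ (Fin d)} {mu : ℝ} (hmu : mu ∈ S (prodSet M t) x)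
    {lam : ℝ} (hlam : 0 < lam) (hle : mu ≤ lam ^ t) : lam ∈ S M x := by
  obtain ⟨hmu0, σ', hσ', C, hC, hb⟩ := hmu
  choose F hFmem hFprod using hσ'
  set σ : ℕ → Matrix (Fin d) (Fin d) ℝ := unblock ht F with hσdef
  have hσmem : ∀ n, σ n ∈ M := fun n => hFmem _ _
  have hK0 : (0:ℝ) ≤ K := le_trans zero_le_one hK1
  have key : ∀ s, traj σ x (t * s) = traj σ' x s := by
    intro s
    induction s with
    | zero => rfl
    | succ s ih =>
      have h1 : traj σ' x (s+1) = mvE (σ' (s+1)) (traj σ' x s) := rfl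
      have h2 : t * (s+1) = t * s + t := by ring
      rw [h1, ← ih, hFprod (s+1), h2, traj_add]
      exact congrArg (fun P => mvE P (traj σ x (t*s)))
        (congrArg List.prod (congrArg List.ofFn (funext fun i => unblock_eq ht F s i)))
  set E : ℝ := max 1 lam⁻¹ with hE
  have hE1 : (1:ℝ) ≤ E := le_max_left _ _
  have hE0 : (0:ℝ) < E := lt_of_lt_of_le one_pos hE1
  refine ⟨hlam.le, σ, hσmem, C * K ^ t * E ^ t, by positivity, fun n => ?_⟩
  obtain ⟨q, r, hr, rfl⟩ : ∃ q r, r < t ∧ n = t * q + r :=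
    ⟨n / t, n % t, Nat.mod_lt _ ht, (Nat.div_add_mod n t).symm⟩
  have h1 : ‖traj σ x (t*q + r)‖ ≤ K ^ r * ‖traj σ' x q‖ := by
    rw [← key q]; exact traj_le hK0 hK σ hσmem x (t*q) r
  have h2 : ‖traj σ' x q‖ ≤ C * mu ^ q * ‖x‖ := hb q
  have h3 : mu ^ q ≤ lam ^ (t*q) := by
    rw [pow_mul]; exact pow_le_pow_left₀ hmu0 hle q
  have h4 : lam ^ (t*q) ≤ E ^ t * lam ^ (t*q + r) := by
    have i1 : (lam⁻¹) ^ r ≤ E ^ r := pow_le_pow_left₀ (inv_nonneg.mpr hlam.le) (le_max_right _ _) r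
    have i2 : E ^ r ≤ E ^ t := pow_le_pow_right₀ hE1 hr.le
    have i3 : (lam⁻¹) ^ r * lam ^ r = 1 := by
      rw [← mul_pow, inv_mul_cancel₀ hlam.ne', one_pow]
    have e1 : (1:ℝ) ≤ E ^ t * lam ^ r := by
      calc (1:ℝ) = lam⁻¹ ^ r * lam ^ r := i3.symm
        _ ≤ E ^ t * lam ^ r :=
            mul_le_mul_of_nonneg_right (i1.trans i2) (pow_nonneg hlam.le r)
    calc lam ^ (t*q) = lam ^ (t*q) * 1 := (mul_one _).symm
      _ ≤ lam ^ (t*q) * (E ^ t * lam ^ r) := mul_le_mul_of_nonneg_left e1 (pow_nonneg hlam.le _)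
      _ = E ^ t * lam ^ (t*q + r) := by rw [pow_add]; ring
  have hKr : K ^ r ≤ K ^ t := pow_le_pow_right₀ hK1 hr.le
  calc ‖traj σ x (t*q + r)‖ ≤ K ^ r * (C * mu ^ q * ‖x‖) :=
        h1.trans (mul_le_mul_of_nonneg_left h2 (pow_nonneg hK0 r))
    _ ≤ K ^ t * (C * (E ^ t * lam ^ (t*q + r)) * ‖x‖) := by
        apply mul_le_mul hKr _ (by positivity) (by positivity)
        apply mul_le_mul_of_nonneg_right _ (norm_nonneg x)
        exact mul_le_mul_of_nonneg_left (h3.trans h4) hC.le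
    _ = C * K ^ t * E ^ t * lam ^ (t*q + r) * ‖x‖ := by ring

lemma stabRadAt_prod {t : ℕ} (ht : 0 < t) {K : ℝ} (hK1 : 1 ≤ K)
    (hK : ∀ A ∈ M, ∀ v : EuclideanSpace ℝ (Fin d), ‖mvE A v‖ ≤ K * ‖v‖)
    (hne : M.Nonempty) (x : EuclideanSpace ℝ (Fin d)) :
    stabRadAt (prodSet M t) x = stabRadAt M x ^ t := by
  obtain ⟨A0, hA0⟩ := hne
  have hK0 : (0:ℝ) ≤ K := le_trans zero_le_one hK1
  have hKmem : K ∈ S M x := K_mem hK0 hK hA0 x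
  have hSne : (S M x).Nonempty := ⟨K, hKmem⟩
  have hS'ne : (S (prodSet M t) x).Nonempty := ⟨K ^ t, pow_mem_S t hKmem⟩
  have hbb : BddBelow (S M x) := S_bddBelow x
  have hbb' : BddBelow (S (prodSet M t) x) := S_bddBelow x
  have h0 : 0 ≤ sInf (S M x) := Real.sInf_nonneg fun _ hy => hy.1
  rw [stabRadAt_eq, stabRadAt_eq]
  apply le_antisymm
  · set f : ℝ → ℝ := fun y => (max y 0) ^ t with hf
    have hmono : Monotone f := fun a b h =>
      pow_le_pow_left₀ (le_max_right _ _) (max_le_max h le_rfl) t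
    have hcont : ContinuousAt f (sInf (S M x)) :=
      ((continuous_id.max continuous_const).pow t).continuousAt
    have himg : f (sInf (S M x)) = sInf (f '' (S M x)) :=
      hmono.map_csInf_of_continuousAt hcont hSne hbb
    have hfx : f (sInf (S M x)) = sInf (S M x) ^ t := by rw [hf]; simp [max_eq_left h0]
    rw [← hfx, himg]
    apply csInf_le_csInf hbb' (hSne.image f)
    rintro y ⟨z, hz, rfl⟩
    have : f z = z ^ t := by rw [hf]; simp [max_eq_left hz.1]
    rw [this]
    exact pow_mem_S t hz
  · apply le_csInf hS'ne
    intro mu hmu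
    have hmu0 : 0 ≤ mu := hmu.1
    rcases eq_or_lt_of_le hmu0 with heq | hpos
    · have hzero : sInf (S M x) ≤ 0 := by
        by_contra h
        push_neg at h
        have h2 : sInf (S M x) ≤ sInf (S M x) / 2 :=
          csInf_le hbb (ungroup ht hK1 hK hmu (by linarith)
            (by rw [← heq]; positivity))
        linarith
      have h3 : sInf (S M x) = 0 := le_antisymm hzero h0
      rw [h3, zero_pow ht.ne', ← heq]
    · set lam : ℝ := mu ^ (1 / (t:ℝ)) with hl
      have hlpos : 0 < lam := Real.rpow_pos_of_pos hpos _
      have hlt : lam ^ t = mu := by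
        rw [hl, ← Real.rpow_natCast (mu ^ (1/(t:ℝ))) t, ← Real.rpow_mul hmu0,
          one_div, inv_mul_cancel₀ (Nat.cast_ne_zero.mpr ht.ne'), Real.rpow_one]
      have hmem : lam ∈ S M x := ungroup ht hK1 hK hmu hlpos (by rw [hlt])
      calc sInf (S M x) ^ t ≤ lam ^ t := pow_le_pow_left₀ h0 (csInf_le hbb hmem) t
        _ = mu := hlt

end StabAux

open StabAux

/-- for compact M and t ≥ 1, ρ̃(Mᵗ) = ρ̃(M)ᵗ. -/
theorem stmt1 {d : ℕ} (M : Set (Matrix (Fin d) (Fin d) ℝ)) (hM : IsCompact M)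
    (t : ℕ) (ht : 0 < t) :
    stabRad (prodSet M t) = stabRad M ^ t := by
  rcases M.eq_empty_or_nonempty with rfl | hne
  · have h1 : prodSet (∅ : Set (Matrix (Fin d) (Fin d) ℝ)) t = ∅ := by
      ext P
      simp only [prodSet, Set.mem_setOf_eq, Set.mem_empty_iff_false, iff_false]
      rintro ⟨A, hA, -⟩
      exact hA ⟨0, ht⟩
    have h2 : ∀ N : Set (Matrix (Fin d) (Fin d) ℝ), N = ∅ →
        ∀ x, stabRadAt N x = 0 := by
      rintro N rfl x
      have hS : S (∅ : Set (Matrix (Fin d) (Fin d) ℝ)) x = ∅ := by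
        ext y
        simp only [S, Set.mem_setOf_eq, Set.mem_empty_iff_false, iff_false]
        rintro ⟨-, σ, hσ, -⟩
        exact hσ 0
      rw [stabRadAt_eq, hS, Real.sInf_empty]
    have h3 : stabRad (∅ : Set (Matrix (Fin d) (Fin d) ℝ)) = 0 := by
      unfold stabRad
      simp [h2 ∅ rfl]
    rw [h1, h3, zero_pow ht.ne']
  · obtain ⟨K, hK1, hK⟩ := exists_K hM hne
    have hK0 : (0:ℝ) ≤ K := le_trans zero_le_one hK1
    obtain ⟨A0, hA0⟩ := hne
    have hpt : ∀ x, stabRadAt (prodSet M t) x = stabRadAt M x ^ t :=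
      stabRadAt_prod ht hK1 hK ⟨A0, hA0⟩
    have hub : ∀ x, stabRadAt M x ≤ K := fun x =>
      csInf_le (S_bddBelow x) (K_mem hK0 hK hA0 x)
    have hbdd : BddAbove (Set.range fun x : EuclideanSpace ℝ (Fin d) => stabRadAt M x) := by
      refine ⟨K, ?_⟩
      rintro y ⟨x, rfl⟩
      exact hub x
    have hnn : ∀ x : EuclideanSpace ℝ (Fin d), 0 ≤ stabRadAt M x := fun x => stabRadAt_nonneg x
    set f : ℝ → ℝ := fun y => (max y 0) ^ t with hf
    have hmono : Monotone f := fun a b h =>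
      pow_le_pow_left₀ (le_max_right _ _) (max_le_max h le_rfl) t
    have hcont : ContinuousAt f (⨆ x : EuclideanSpace ℝ (Fin d), stabRadAt M x) :=
      ((continuous_id.max continuous_const).pow t).continuousAt
    have hmap : f (⨆ x : EuclideanSpace ℝ (Fin d), stabRadAt M x)
        = ⨆ x : EuclideanSpace ℝ (Fin d), f (stabRadAt M x) :=
      hmono.map_ciSup_of_continuousAt hcont hbdd
    have hsupnn : 0 ≤ ⨆ x : EuclideanSpace ℝ (Fin d), stabRadAt M x := Real.iSup_nonneg hnn
    calc stabRad (prodSet M t)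
        = ⨆ x : EuclideanSpace ℝ (Fin d), stabRadAt M x ^ t := iSup_congr hpt
      _ = ⨆ x : EuclideanSpace ℝ (Fin d), f (stabRadAt M x) :=
          iSup_congr fun x => by rw [hf]; simp [max_eq_left (hnn x)]
      _ = f (⨆ x : EuclideanSpace ℝ (Fin d), stabRadAt M x) := hmap.symm
      _ = stabRad M ^ t := by rw [hf]; simp [stabRad, max_eq_left hsupnn]
end
end

section
/- For the set M = {A₁, A₂} with A₁ the rotation by π/4 and A₂ = diag(1/2, 2), the joint spectral subradius ρ̌(M) equals 1, while the pointwise stabilization radius satisfies ρ̃(M) ≤ 0.9^{1/4} < 1; in particular ρ̌(M) ≠ ρ̃(M). -/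
open Matrix Filter

noncomputable section

/-- Rotation by π/4. -/
def A1 : Matrix (Fin 2) (Fin 2) ℝ := (Real.sqrt 2 / 2) • !![1, 1; -1, 1]

/-- diag(1/2, 2). -/
def A2 : Matrix (Fin 2) (Fin 2) ℝ := !![1/2, 0; 0, 2]
def nsq (v : Fin 2 → ℝ) : ℝ := (v 0)^2 + (v 1)^2

lemma hr2 : Real.sqrt 2 ^ 2 = 2 := Real.sq_sqrt (by norm_num)

lemma A1_mulVec (v : Fin 2 → ℝ) :
    A1.mulVec v = ![(Real.sqrt 2/2) * (v 0 + v 1), (Real.sqrt 2/2) * (v 1 - v 0)] := by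
  funext i; fin_cases i <;>
    simp [A1, Matrix.mulVec, dotProduct, Fin.sum_univ_two, Matrix.smul_apply] <;> ring

lemma A2_mulVec (v : Fin 2 → ℝ) : A2.mulVec v = ![v 0 / 2, 2 * v 1] := by
  funext i; fin_cases i <;>
    simp [A2, Matrix.mulVec, dotProduct, Fin.sum_univ_two] <;> ring

lemma nsq_A1 (v : Fin 2 → ℝ) : nsq (A1.mulVec v) = nsq v := by
  rw [A1_mulVec]; simp only [nsq, Matrix.cons_val_zero, Matrix.cons_val_one, Matrix.head_cons]
  linear_combination ((v 0)^2/2 + (v 1)^2/2) * hr2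

def cone (v : Fin 2 → ℝ) : Prop := (v 1)^2 ≤ (2 - Real.sqrt 2)/4 * nsq v

lemma nsq_A2 (v : Fin 2 → ℝ) (h : cone v) : nsq (A2.mulVec v) ≤ 0.81 * nsq v := by
  rw [A2_mulVec]
  simp only [nsq, Matrix.cons_val_zero, Matrix.cons_val_one, Matrix.head_cons]
  unfold cone nsq at h
  have h14 : (1.404 : ℝ) ≤ Real.sqrt 2 := by nlinarith [hr2, Real.sqrt_nonneg 2]
  nlinarith [h, mul_nonneg (sq_nonneg (v 0)) (sub_nonneg.2 h14),
    mul_nonneg (sq_nonneg (v 1)) (sub_nonneg.2 h14)]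

open Classical in

def step (v : Fin 2 → ℝ) : Matrix (Fin 2) (Fin 2) ℝ := if cone v then A2 else A1

def vseq (x : Fin 2 → ℝ) : ℕ → (Fin 2 → ℝ)
  | 0 => x
  | t + 1 => (step (vseq x t)).mulVec (vseq x t)

lemma vseq_mono (x : Fin 2 → ℝ) (t : ℕ) : nsq (vseq x (t+1)) ≤ nsq (vseq x t) := by
  show nsq ((step (vseq x t)).mulVec (vseq x t)) ≤ _
  unfold step
  split_ifs with h
  · have h2 := nsq_A2 _ h
    have : 0 ≤ nsq (vseq x t) := by unfold nsq; positivity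
    linarith
  · exact le_of_eq (nsq_A1 _)

lemma vseq_anti (x : Fin 2 → ℝ) {s t : ℕ} (h : s ≤ t) : nsq (vseq x t) ≤ nsq (vseq x s) := by
  induction t with
  | zero => simp_all
  | succ n ih =>
    rcases Nat.lt_or_ge s (n+1) with h' | h'
    · exact le_trans (vseq_mono x n) (ih (by omega))
    · have : s = n + 1 := by omega
      subst this; rfl

lemma key (a b : ℝ) (h0 : ¬ (b^2 ≤ (2 - Real.sqrt 2)/4 * (a^2+b^2)))
    (h1 : ¬ ((b-a)^2/2 ≤ (2 - Real.sqrt 2)/4 * (a^2+b^2)))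
    (h2 : ¬ (a^2 ≤ (2 - Real.sqrt 2)/4 * (a^2+b^2))) :
    (a+b)^2/2 ≤ (2 - Real.sqrt 2)/4 * (a^2+b^2) := by
  push_neg at *
  by_contra h3
  push_neg at h3
  set r := Real.sqrt 2 with hr
  have hr1 : 1 < r := by nlinarith [Real.sqrt_nonneg 2, hr2]
  set N := a^2 + b^2 with hN
  set s := (2 - r)/4 * N with hs
  have key1 : (a^2 - s) * (b^2 - s) > 0 := mul_pos (by linarith) (by linarith)
  have h8 : s * (N - s) = N^2/8 := by
    rw [hs, hN]; linear_combination (-((a^2+b^2)^2)/16) * hr2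
  nlinarith [sq_nonneg (a*b), sq_nonneg (a-b), sq_nonneg (a+b), key1, h8, sq_nonneg (a^2-b^2)]

lemma exists_cone (x : Fin 2 → ℝ) (t : ℕ) : ∃ j ≤ 3, cone (vseq x (t+j)) := by
  set v := vseq x t with hv
  by_cases c0 : cone (vseq x t)
  · exact ⟨0, by omega, c0⟩
  have e1 : vseq x (t+1) = A1.mulVec v := by
    show (step (vseq x t)).mulVec (vseq x t) = _
    rw [hv, step, if_neg c0]
  by_cases c1 : cone (vseq x (t+1))
  · exact ⟨1, by omega, c1⟩
  have e2 : vseq x (t+2) = ![v 1, -(v 0)] := by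
    show (step (vseq x (t+1))).mulVec (vseq x (t+1)) = _
    rw [step, if_neg c1, e1, A1_mulVec, A1_mulVec]
    funext i; fin_cases i
    · simp; linear_combination (v 1 / 2) * hr2
    · simp; linear_combination (-(v 0) / 2) * hr2
  by_cases c2 : cone (vseq x (t+2))
  · exact ⟨2, by omega, c2⟩
  have e3 : vseq x (t+3) = ![(Real.sqrt 2/2) * (v 1 - v 0), -((Real.sqrt 2/2) * (v 0 + v 1))] := by
    show (step (vseq x (t+2))).mulVec (vseq x (t+2)) = _
    rw [step, if_neg c2, e2, A1_mulVec]
    funext i; fin_cases i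
    · simp; ring
    · simp; ring
  refine ⟨3, by omega, ?_⟩
  have hn1 : nsq (vseq x (t+1)) = nsq v := by rw [e1, nsq_A1]
  have hn2 : nsq (vseq x (t+2)) = nsq v := by
    rw [show t+2 = (t+1)+1 by ring] at *
    show nsq ((step (vseq x (t+1))).mulVec (vseq x (t+1))) = _
    rw [step, if_neg c1, nsq_A1, hn1]
  have hn3 : nsq (vseq x (t+3)) = nsq v := by
    rw [show t+3 = (t+2)+1 by ring]
    show nsq ((step (vseq x (t+2))).mulVec (vseq x (t+2))) = _
    rw [step, if_neg c2, nsq_A1, hn2]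
  -- translate the hypotheses
  set a := v 0; set b := v 1
  have hvnsq : nsq v = a^2 + b^2 := rfl
  have H0 : ¬ (b^2 ≤ (2 - Real.sqrt 2)/4 * (a^2+b^2)) := by
    rw [← hvnsq]; exact c0
  have H1 : ¬ ((b-a)^2/2 ≤ (2 - Real.sqrt 2)/4 * (a^2+b^2)) := by
    intro hcon; apply c1
    unfold cone
    rw [hn1, e1, A1_mulVec, hvnsq]
    simp only [Matrix.cons_val_one, Matrix.head_cons]
    calc (Real.sqrt 2/2 * (b - a))^2 = (b-a)^2/2 + (b-a)^2/4*(Real.sqrt 2^2 - 2) := by ring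
    _ ≤ (2 - Real.sqrt 2)/4 * (a^2+b^2) := by rw [hr2]; simpa using hcon
  have H2 : ¬ (a^2 ≤ (2 - Real.sqrt 2)/4 * (a^2+b^2)) := by
    intro hcon; apply c2
    unfold cone
    rw [hn2, e2, hvnsq]
    simpa using hcon
  have H3 := key a b H0 H1 H2
  unfold cone
  rw [hn3, e3, hvnsq]
  simp only [Matrix.cons_val_one, Matrix.head_cons]
  calc (-(Real.sqrt 2/2 * (a + b)))^2 = (a+b)^2/2 + (a+b)^2/4*(Real.sqrt 2^2 - 2) := by ring
  _ ≤ (2 - Real.sqrt 2)/4 * (a^2+b^2) := by rw [hr2]; simpa using H3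

lemma nsq_nonneg (v : Fin 2 → ℝ) : 0 ≤ nsq v := by unfold nsq; positivity

lemma contract4 (x : Fin 2 → ℝ) (t : ℕ) : nsq (vseq x (t+4)) ≤ 0.81 * nsq (vseq x t) := by
  obtain ⟨j, hj, hc⟩ := exists_cone x t
  have h1 : nsq (vseq x (t+4)) ≤ nsq (vseq x (t+j+1)) := vseq_anti x (by omega)
  have h2 : nsq (vseq x (t+j+1)) ≤ 0.81 * nsq (vseq x (t+j)) := by
    show nsq ((step (vseq x (t+j))).mulVec (vseq x (t+j))) ≤ _
    rw [step, if_pos hc]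
    exact nsq_A2 _ hc
  have h3 : nsq (vseq x (t+j)) ≤ nsq (vseq x t) := vseq_anti x (by omega)
  nlinarith [nsq_nonneg (vseq x (t+j))]

lemma decay (x : Fin 2 → ℝ) : ∀ t, nsq (vseq x t) ≤ 0.81 ^ (t/4) * nsq x := by
  intro t
  induction t using Nat.strong_induction_on with
  | _ t ih =>
    rcases Nat.lt_or_ge t 4 with h | h
    · have : t / 4 = 0 := by omega
      rw [this, pow_zero, one_mul]
      exact vseq_anti x (Nat.zero_le t)
    · have ht : t = (t - 4) + 4 := by omega
      have h1 : nsq (vseq x t) ≤ 0.81 * nsq (vseq x (t-4)) := by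
        rw [ht]; exact contract4 x (t-4)
      have h2 := ih (t-4) (by omega)
      have hd : (t-4)/4 + 1 = t/4 := by omega
      calc nsq (vseq x t) ≤ 0.81 * (0.81 ^ ((t-4)/4) * nsq x) := by nlinarith
      _ = 0.81 ^ (t/4) * nsq x := by rw [← hd, pow_succ]; ring

def sig (x : Fin 2 → ℝ) : ℕ → Matrix (Fin 2) (Fin 2) ℝ
  | 0 => A1
  | t + 1 => step (vseq x t)

lemma traj_eq_vseq (x : EuclideanSpace ℝ (Fin 2)) (t : ℕ) :
    traj (sig x) x t = vseq x t := by
  induction t with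
  | zero => rfl
  | succ n ih => show ((sig x (n+1)).mulVec (traj (sig x) x n)) = _
                 rw [ih]; rfl

lemma norm_eq_sqrt_nsq (w : EuclideanSpace ℝ (Fin 2)) : ‖w‖ = Real.sqrt (nsq w) := by
  rw [EuclideanSpace.norm_eq]
  congr 1
  simp [Fin.sum_univ_two, nsq, sq_abs]

lemma sig_mem (x : Fin 2 → ℝ) (t : ℕ) : sig x t ∈ ({A1, A2} : Set (Matrix (Fin 2) (Fin 2) ℝ)) := by
  cases t with
  | zero => exact Set.mem_insert _ _
  | succ n =>
    show step (vseq x n) ∈ _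
    rw [step]
    split_ifs
    · exact Set.mem_insert_iff.2 (Or.inr rfl)
    · exact Set.mem_insert _ _

lemma lam_pow4 : ((0.9:ℝ) ^ ((1:ℝ)/4)) ^ (4:ℕ) = 0.9 := by
  rw [← Real.rpow_natCast ((0.9:ℝ) ^ ((1:ℝ)/4)) 4, ← Real.rpow_mul (by norm_num)]
  norm_num

lemma lam_pos : 0 < (0.9:ℝ) ^ ((1:ℝ)/4) := Real.rpow_pos_of_pos (by norm_num) _

lemma lam_le_one : (0.9:ℝ) ^ ((1:ℝ)/4) ≤ 1 :=
  le_of_lt (Real.rpow_lt_one (by norm_num) (by norm_num) (by norm_num))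

lemma traj_bound (x : EuclideanSpace ℝ (Fin 2)) (t : ℕ) :
    ‖traj (sig x) x t‖ ≤ (10/9) * ((0.9:ℝ) ^ ((1:ℝ)/4)) ^ t * ‖x‖ := by
  set lam := (0.9:ℝ) ^ ((1:ℝ)/4) with hlam
  have h1 : ‖traj (sig x) x t‖ ≤ (0.9:ℝ) ^ (t/4) * ‖x‖ := by
    rw [norm_eq_sqrt_nsq, norm_eq_sqrt_nsq, traj_eq_vseq]
    have := decay x t
    calc Real.sqrt (nsq (vseq x t)) ≤ Real.sqrt (0.81 ^ (t/4) * nsq x) :=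
          Real.sqrt_le_sqrt this
    _ = (0.9:ℝ)^(t/4) * Real.sqrt (nsq x) := by
        rw [show (0.81:ℝ) ^ (t/4) = ((0.9:ℝ)^(t/4))^2 by
            rw [show (0.81:ℝ) = 0.9^2 by norm_num, ← pow_mul, mul_comm, pow_mul],
          Real.sqrt_mul (by positivity), Real.sqrt_sq (by positivity)]
  have h2 : (0.9:ℝ) ^ (t/4) ≤ (10/9) * lam ^ t := by
    have e1 : (0.9:ℝ) ^ (t/4) = lam ^ (4 * (t/4)) := by
      rw [pow_mul, lam_pow4]
    have e2 : lam ^ (4*(t/4)) ≤ lam ^ (t - 3) :=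
      pow_le_pow_of_le_one (le_of_lt lam_pos) lam_le_one (by omega)
    have e3 : (0.9:ℝ) * lam ^ (t-3) = lam ^ ((t-3) + 4) := by
      rw [pow_add, lam_pow4]; ring
    have e4 : lam ^ ((t-3)+4) ≤ lam ^ t :=
      pow_le_pow_of_le_one (le_of_lt lam_pos) lam_le_one (by omega)
    have : (0.9:ℝ) * lam ^ (t-3) ≤ lam ^ t := by rw [e3]; exact e4
    calc (0.9:ℝ) ^ (t/4) = lam ^ (4*(t/4)) := e1
    _ ≤ lam ^ (t-3) := e2
    _ ≤ (10/9) * lam ^ t := by linarith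
  have hx : 0 ≤ ‖x‖ := norm_nonneg x
  calc ‖traj (sig x) x t‖ ≤ (0.9:ℝ) ^ (t/4) * ‖x‖ := h1
  _ ≤ (10/9) * lam ^ t * ‖x‖ := by nlinarith

lemma stabRadAt_le (x : EuclideanSpace ℝ (Fin 2)) :
    stabRadAt {A1, A2} x ≤ (0.9:ℝ) ^ ((1:ℝ)/4) := by
  apply csInf_le
  · exact ⟨0, fun y hy => hy.1⟩
  · exact ⟨le_of_lt lam_pos, sig x, sig_mem x, 10/9, by norm_num, traj_bound x⟩

lemma stabRad_le : stabRad {A1, A2} ≤ (0.9:ℝ) ^ ((1:ℝ)/4) :=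
  ciSup_le stabRadAt_le

lemma clm_apply (A : Matrix (Fin 2) (Fin 2) ℝ) (w : EuclideanSpace ℝ (Fin 2)) :
    Matrix.toEuclideanCLM (𝕜 := ℝ) A w = (WithLp.toLp 2 (A.mulVec w) : EuclideanSpace ℝ (Fin 2)) := rfl

lemma det_A1 : A1.det = 1 := by
  simp only [A1, Matrix.det_fin_two, Matrix.smul_apply, Matrix.of_apply]
  norm_num [Matrix.cons_val_zero, Matrix.cons_val_one, Matrix.head_cons, smul_eq_mul]
  nlinarith [hr2]

lemma det_A2 : A2.det = 1 := by simp [A2, Matrix.det_fin_two]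

lemma det_prodSet {t : ℕ} {P : Matrix (Fin 2) (Fin 2) ℝ} (hP : P ∈ prodSet {A1, A2} t) :
    P.det = 1 := by
  obtain ⟨A, hA, rfl⟩ := hP
  have hmap := map_list_prod (Matrix.detMonoidHom) (List.ofFn A)
  rw [show ⇑(Matrix.detMonoidHom) = (Matrix.det : Matrix (Fin 2) (Fin 2) ℝ → ℝ) from
    Matrix.coe_detMonoidHom] at hmap
  rw [show (List.ofFn A).prod.det = ((List.ofFn A).map Matrix.det).prod from hmap]
  apply List.prod_eq_one
  intro y hy
  obtain ⟨m, hm, rfl⟩ := List.mem_map.1 hy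
  obtain ⟨i, rfl⟩ := List.mem_ofFn.1 hm
  rcases hA i with h | h
  · rw [h]; exact det_A1
  · rw [h]; exact det_A2

lemma one_le_norm {t : ℕ} {P : Matrix (Fin 2) (Fin 2) ℝ} (hP : P ∈ prodSet {A1, A2} t) :
    1 ≤ ‖Matrix.toEuclideanCLM (𝕜 := ℝ) P‖ := by
  set T := Matrix.toEuclideanCLM (𝕜 := ℝ) P with hT
  have hdet : P 0 0 * P 1 1 - P 0 1 * P 1 0 = 1 := by
    have := det_prodSet hP; rwa [Matrix.det_fin_two] at this
  have hcol : ∀ j : Fin 2, Real.sqrt ((P 0 j)^2 + (P 1 j)^2) ≤ ‖T‖ := by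
    intro j
    have h1 : ‖T (EuclideanSpace.single j 1)‖ ≤ ‖T‖ * ‖(EuclideanSpace.single j (1:ℝ))‖ :=
      T.le_opNorm _
    rw [EuclideanSpace.norm_single] at h1
    have h2 : T (EuclideanSpace.single j 1) = (WithLp.toLp 2 (P.mulVec (Pi.single j 1)) : EuclideanSpace ℝ (Fin 2)) := rfl
    rw [h2, norm_eq_sqrt_nsq, WithLp.ofLp_toLp] at h1
    have h3 : ∀ i, P.mulVec (Pi.single j (1:ℝ)) i = P i j := fun i => by
      simp [Matrix.mulVec_single]
    have h4 : nsq (P.mulVec (Pi.single j 1)) = (P 0 j)^2 + (P 1 j)^2 := by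
      unfold nsq; rw [h3 0, h3 1]
    rw [h4] at h1
    simpa using h1
  have hX := hcol 0
  have hY := hcol 1
  have hXY : 1 ≤ ((P 0 0)^2 + (P 1 0)^2) * ((P 0 1)^2 + (P 1 1)^2) := by
    nlinarith [sq_nonneg (P 0 0 * P 0 1 + P 1 0 * P 1 1), hdet, sq_nonneg (P 0 0 * P 1 1 - P 0 1 * P 1 0)]
  have hXn : 0 ≤ (P 0 0)^2 + (P 1 0)^2 := by positivity
  have h5 : 1 ≤ Real.sqrt ((P 0 0)^2 + (P 1 0)^2) * Real.sqrt ((P 0 1)^2 + (P 1 1)^2) := by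
    rw [← Real.sqrt_mul hXn]
    exact Real.one_le_sqrt.2 hXY
  nlinarith [Real.sqrt_nonneg ((P 0 0)^2 + (P 1 0)^2), Real.sqrt_nonneg ((P 0 1)^2 + (P 1 1)^2),
    norm_nonneg T]

lemma norm_A1pow (t : ℕ) :
    ‖Matrix.toEuclideanCLM (𝕜 := ℝ) ((List.ofFn (fun _ : Fin t => A1)).prod)‖ = 1 := by
  have hprod : (List.ofFn (fun _ : Fin t => A1)).prod = A1 ^ t := by
    simp [List.ofFn_const]
  rw [hprod, map_pow]
  set T := Matrix.toEuclideanCLM (𝕜 := ℝ) A1 with hTdef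
  have hiso : ∀ w : EuclideanSpace ℝ (Fin 2), ‖T w‖ = ‖w‖ := by
    intro w
    rw [show T w = (WithLp.toLp 2 (A1.mulVec w) : EuclideanSpace ℝ (Fin 2)) from rfl,
      norm_eq_sqrt_nsq, norm_eq_sqrt_nsq, WithLp.ofLp_toLp, nsq_A1]
  have hisot : ∀ (n : ℕ) (w : EuclideanSpace ℝ (Fin 2)), ‖(T ^ n) w‖ = ‖w‖ := by
    intro n
    induction n with
    | zero => intro w; simp
    | succ n ih =>
      intro w
      rw [pow_succ, ContinuousLinearMap.mul_apply, ih (T w), hiso w]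
  apply le_antisymm
  · apply ContinuousLinearMap.opNorm_le_bound _ zero_le_one
    intro w; rw [hisot t w, one_mul]
  · have h1 : ‖(T ^ t) (EuclideanSpace.single 0 1)‖ ≤ ‖T ^ t‖ * ‖(EuclideanSpace.single (0 : Fin 2) (1:ℝ))‖ :=
      (T ^ t).le_opNorm _
    rw [hisot, EuclideanSpace.norm_single] at h1
    simpa using h1

lemma sInf_eq_one (t : ℕ) :
    sInf ((fun P : Matrix (Fin 2) (Fin 2) ℝ => ‖Matrix.toEuclideanCLM (𝕜 := ℝ) P‖ ^ ((t : ℝ)⁻¹)) ''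
      prodSet {A1, A2} t) = 1 := by
  have hmem : (1:ℝ) ∈ (fun P : Matrix (Fin 2) (Fin 2) ℝ =>
      ‖Matrix.toEuclideanCLM (𝕜 := ℝ) P‖ ^ ((t : ℝ)⁻¹)) '' prodSet {A1, A2} t := by
    refine ⟨(List.ofFn (fun _ : Fin t => A1)).prod, ⟨fun _ => A1, fun i => Set.mem_insert _ _, rfl⟩, ?_⟩
    show ‖Matrix.toEuclideanCLM (𝕜 := ℝ) ((List.ofFn (fun _ : Fin t => A1)).prod)‖ ^ ((t : ℝ)⁻¹) = 1
    rw [norm_A1pow, Real.one_rpow]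
  have hlb : ∀ y ∈ (fun P : Matrix (Fin 2) (Fin 2) ℝ =>
      ‖Matrix.toEuclideanCLM (𝕜 := ℝ) P‖ ^ ((t : ℝ)⁻¹)) '' prodSet {A1, A2} t, 1 ≤ y := by
    rintro y ⟨P, hP, rfl⟩
    have h1 := one_le_norm hP
    calc (1:ℝ) = 1 ^ ((t:ℝ)⁻¹) := (Real.one_rpow _).symm
    _ ≤ ‖Matrix.toEuclideanCLM (𝕜 := ℝ) P‖ ^ ((t : ℝ)⁻¹) :=
      Real.rpow_le_rpow zero_le_one h1 (by positivity)
  exact le_antisymm (csInf_le ⟨1, hlb⟩ hmem) (le_csInf ⟨1, hmem⟩ hlb)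

/-- for M = {A₁, A₂}, the joint spectral subradius
(the limit of inf over products of t matrices of ‖P‖^(1/t)) equals 1,
while the pointwise stabilization radius satisfies ρ̃(M) ≤ 0.9^(1/4) < 1;
in particular ρ̃(M) < 1 differs from the joint spectral subradius. -/
theorem stmt4 :
    Tendsto (fun t : ℕ =>
        sInf ((fun P : Matrix (Fin 2) (Fin 2) ℝ => ‖Matrix.toEuclideanCLM (𝕜 := ℝ) P‖ ^ ((t : ℝ)⁻¹)) ''
          prodSet {A1, A2} t)) atTop (nhds 1) ∧
    stabRad {A1, A2} ≤ (0.9 : ℝ) ^ ((1 : ℝ) / 4) ∧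
    (0.9 : ℝ) ^ ((1 : ℝ) / 4) < 1 ∧
    stabRad {A1, A2} < 1 := by
  have hlt1 : (0.9 : ℝ) ^ ((1 : ℝ) / 4) < 1 :=
    Real.rpow_lt_one (by norm_num) (by norm_num) (by norm_num)
  refine ⟨?_, stabRad_le, hlt1, lt_of_le_of_lt stabRad_le hlt1⟩
  have h : (fun t : ℕ =>
      sInf ((fun P : Matrix (Fin 2) (Fin 2) ℝ => ‖Matrix.toEuclideanCLM (𝕜 := ℝ) P‖ ^ ((t : ℝ)⁻¹)) ''
        prodSet {A1, A2} t)) = fun _ => (1:ℝ) := funext sInf_eq_one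
  rw [h]
  exact tendsto_const_nhds
end
end

section
/- Let K ⊂ ℝ^d be a closed convex cone contained in a half-space {x : vᵀx ≥ 0} for some nonzero v, and embedded in the half-space in the sense that K ∖ {0} is contained in its open interior {x : vᵀx > 0}. Then there exists C > 0 such that for all w₁, w₂ with w₁ − w₂ ∈ K and w₂ ∈ K, one has |w₁| ≥ C |w₂|. -/
open scoped RealInnerProductSpace

noncomputable section

/-- if K is a closed convex cone contained in the half-space
{x : ⟪v,x⟫ ≥ 0} and embedded in it (K ∖ {0} ⊆ {x : ⟪v,x⟫ > 0}), then there is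
C > 0 with |w₁| ≥ C |w₂| whenever w₁ ≥_K w₂ ≥_K 0. -/
theorem stmt5 {d : ℕ} (K : Set (EuclideanSpace ℝ (Fin d))) (v : EuclideanSpace ℝ (Fin d))
    (hv : v ≠ 0) (hclosed : IsClosed K) (hconv : Convex ℝ K)
    (hcone : ∀ (c : ℝ), 0 ≤ c → ∀ x ∈ K, c • x ∈ K)
    (hhalf : ∀ x ∈ K, 0 ≤ ⟪v, x⟫)
    (hemb : ∀ x ∈ K, x ≠ 0 → 0 < ⟪v, x⟫) :
    ∃ C > 0, ∀ w₁ w₂ : EuclideanSpace ℝ (Fin d),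
      w₁ - w₂ ∈ K → w₂ ∈ K → C * ‖w₂‖ ≤ ‖w₁‖ := by
  set S : Set (EuclideanSpace ℝ (Fin d)) := Metric.sphere 0 1 ∩ K with hS
  have hScpt : IsCompact S := (isCompact_sphere (0 : EuclideanSpace ℝ (Fin d)) 1).inter_right hclosed
  by_cases hne : S.Nonempty
  · obtain ⟨x₀, hx₀S, hmin⟩ := hScpt.exists_isMinOn hne
      (Continuous.continuousOn (continuous_const.inner continuous_id : Continuous fun x : EuclideanSpace ℝ (Fin d) => ⟪v, x⟫))
    set c : ℝ := ⟪v, x₀⟫ with hc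
    have hx₀norm : ‖x₀‖ = 1 := by simpa using hx₀S.1
    have hcpos : 0 < c := hemb x₀ hx₀S.2 (by intro h; simp [h] at hx₀norm)
    refine ⟨c / ‖v‖, div_pos hcpos (norm_pos_iff.mpr hv), ?_⟩
    intro w₁ w₂ h12 h2
    -- key: ⟪v, w₂⟫ ≥ c * ‖w₂‖
    have key : c * ‖w₂‖ ≤ ⟪v, w₂⟫ := by
      rcases eq_or_ne w₂ 0 with rfl | hw2
      · simp
      · have hnorm : 0 < ‖w₂‖ := norm_pos_iff.mpr hw2
        have hmem : (‖w₂‖⁻¹ • w₂) ∈ S := by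
          constructor
          · simp [norm_smul, abs_of_nonneg (inv_nonneg.mpr hnorm.le),
              inv_mul_cancel₀ hnorm.ne']
          · exact hcone _ (inv_nonneg.mpr hnorm.le) _ h2
        have h1 : c ≤ ‖w₂‖⁻¹ * ⟪v, w₂⟫ := by
          have h := hmin hmem
          simp only [Set.mem_setOf_eq, real_inner_smul_right] at h
          exact h
        calc c * ‖w₂‖ ≤ (‖w₂‖⁻¹ * ⟪v, w₂⟫) * ‖w₂‖ := by
              exact mul_le_mul_of_nonneg_right h1 hnorm.le
          _ = ⟪v, w₂⟫ := by field_simp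
    have hw1 : c * ‖w₂‖ ≤ ⟪v, w₁⟫ := by
      have : ⟪v, w₁⟫ = ⟪v, w₁ - w₂⟫ + ⟪v, w₂⟫ := by
        rw [← inner_add_right, sub_add_cancel]
      rw [this]
      have := hhalf _ h12
      linarith
    have hcs : ⟪v, w₁⟫ ≤ ‖v‖ * ‖w₁‖ := real_inner_le_norm v w₁
    rw [div_mul_eq_mul_div, div_le_iff₀ (norm_pos_iff.mpr hv)]
    calc c * ‖w₂‖ ≤ ⟪v, w₁⟫ := hw1
      _ ≤ ‖v‖ * ‖w₁‖ := hcs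
      _ = ‖w₁‖ * ‖v‖ := mul_comm _ _
  · -- S empty means K ⊆ {0}
    refine ⟨1, one_pos, ?_⟩
    intro w₁ w₂ h12 h2
    have : w₂ = 0 := by
      by_contra hw2
      have hnorm : 0 < ‖w₂‖ := norm_pos_iff.mpr hw2
      exact hne ⟨‖w₂‖⁻¹ • w₂, by
        simp [hS, norm_smul, abs_of_nonneg (inv_nonneg.mpr hnorm.le),
          inv_mul_cancel₀ hnorm.ne'],
        hcone _ (inv_nonneg.mpr hnorm.le) _ h2⟩
    simp [this]
end
end

section
/- Let A = diag(2,1,1) and B be the 3×3 matrix with first column zero and all entries of the last two columns equal to 1 (i.e. B = [[0,1,1],[0,1,1],[0,1,1]]). Then B·e = 2e and B·Aᵀ'·e = 2e for all t (where e = (1,1,1)ᵀ and Aᵗ e has second and third coordinates equal to 1). Consequently, for every 0-homogeneous feedback σ : ℝ³ → {A,B}, the closed-loop trajectory from e satisfies limsup_{t→∞} |x(t)|^{1/t} > 1. -/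
open Matrix Filter

noncomputable section

/-- A = diag(2,1,1). -/
def Amat : Matrix (Fin 3) (Fin 3) ℝ := !![2, 0, 0; 0, 1, 0; 0, 0, 1]

/-- B = [[0,1,1],[0,1,1],[0,1,1]]. -/
def Bmat : Matrix (Fin 3) (Fin 3) ℝ := !![0, 1, 1; 0, 1, 1; 0, 1, 1]

/-- The all-ones vector e = (1,1,1)ᵀ. -/
def eVec : EuclideanSpace ℝ (Fin 3) := WithLp.toLp 2 (fun _ => 1)


def aPow (t : ℕ) : EuclideanSpace ℝ (Fin 3) := WithLp.toLp 2 ![(2:ℝ)^t, 1, 1]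

lemma eVec_eq : eVec = aPow 0 := by
  ext i; fin_cases i <;> simp [eVec, aPow]

lemma A_mulVec (t : ℕ) : Amat.mulVec (aPow t) = aPow (t+1) := by
  funext i; fin_cases i <;>
    simp [Amat, aPow, Matrix.mulVec, dotProduct, Fin.sum_univ_three] <;> ring

lemma B_mulVec (t : ℕ) : Bmat.mulVec (aPow t) = ((2:ℝ) • aPow 0 : EuclideanSpace ℝ (Fin 3)) := by
  funext i; fin_cases i <;>
    simp [Bmat, aPow, Matrix.mulVec, dotProduct, Fin.sum_univ_three, PiLp.smul_apply,
      smul_eq_mul, Matrix.vecHead, Matrix.vecTail] <;> norm_num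

lemma A_mulVec_smul (c : ℝ) (t : ℕ) :
    Amat.mulVec ((c • aPow t : EuclideanSpace ℝ (Fin 3))) = (c • aPow (t+1) : EuclideanSpace ℝ (Fin 3)) := by
  rw [WithLp.ofLp_smul, Matrix.mulVec_smul, A_mulVec, WithLp.ofLp_smul]

lemma B_mulVec_smul (c : ℝ) (t : ℕ) :
    Bmat.mulVec ((c • aPow t : EuclideanSpace ℝ (Fin 3))) = ((2*c) • aPow 0 : EuclideanSpace ℝ (Fin 3)) := by
  rw [WithLp.ofLp_smul, Matrix.mulVec_smul, B_mulVec, WithLp.ofLp_smul, WithLp.ofLp_smul, smul_smul, mul_comm]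

lemma Apow_mulVec (t : ℕ) : (Amat ^ t).mulVec eVec = aPow t := by
  induction t with
  | zero => simp [eVec_eq]
  | succ t ih => rw [pow_succ', ← Matrix.mulVec_mulVec, ih, A_mulVec]

lemma norm_aPow_sq (t : ℕ) : ‖aPow t‖ = Real.sqrt (((2:ℝ)^t)^2 + 2) := by
  rw [EuclideanSpace.norm_eq]
  congr 1
  simp [aPow, Fin.sum_univ_three]
  ring

lemma norm_aPow_ge (t : ℕ) : (2:ℝ)^t ≤ ‖aPow t‖ := by
  rw [norm_aPow_sq]
  have h := Real.sqrt_le_sqrt (show ((2:ℝ)^t)^2 ≤ ((2:ℝ)^t)^2 + 2 by linarith)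
  rwa [Real.sqrt_sq (by positivity)] at h

lemma norm_aPow_le (t : ℕ) : ‖aPow t‖ ≤ 2^t * Real.sqrt 3 := by
  rw [norm_aPow_sq]
  have h1 : (1:ℝ) ≤ ((2:ℝ)^t)^2 := by
    have : (1:ℝ) ≤ (2:ℝ)^t := one_le_pow₀ one_le_two
    nlinarith
  have hsq : ((2^t:ℝ) * Real.sqrt 3)^2 = ((2:ℝ)^t)^2 * 3 := by
    rw [mul_pow, Real.sq_sqrt (by norm_num)]
  have h2 : ((2:ℝ)^t)^2 + 2 ≤ ((2^t:ℝ) * Real.sqrt 3)^2 := by rw [hsq]; linarith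
  have h := Real.sqrt_le_sqrt h2
  rwa [Real.sqrt_sq (by positivity)] at h

/-- Closed-loop trajectory under a feedback σ : x(0) = x₀, x(t+1) = σ(x(t))·x(t). -/
def clTraj (σ : EuclideanSpace ℝ (Fin 3) → Matrix (Fin 3) (Fin 3) ℝ)
    (x0 : EuclideanSpace ℝ (Fin 3)) : ℕ → EuclideanSpace ℝ (Fin 3)
  | 0 => x0
  | t + 1 => (WithLp.toLp 2 ((σ (clTraj σ x0 t)).mulVec (clTraj σ x0 t)) : EuclideanSpace ℝ (Fin 3))


lemma clTraj_succ (σ : EuclideanSpace ℝ (Fin 3) → Matrix (Fin 3) (Fin 3) ℝ)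
    (x0 : EuclideanSpace ℝ (Fin 3)) (t : ℕ) :
    clTraj σ x0 (t+1) = (WithLp.toLp 2 ((σ (clTraj σ x0 t)).mulVec (clTraj σ x0 t)) : EuclideanSpace ℝ (Fin 3)) := rfl

lemma tail_lemma (x : ℕ → EuclideanSpace ℝ (Fin 3)) (m : ℕ) (hm : 1 ≤ m)
    (hub : ∀ t, ‖x t‖ ≤ 2^t * Real.sqrt 3)
    (hlb : ∀ n : ℕ, (2:ℝ)^n ≤ ‖x (n*m)‖) :
    1 < Filter.limsup (fun t : ℕ => ‖x t‖ ^ ((t : ℝ)⁻¹)) Filter.atTop := by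
  have hsqrt3 : Real.sqrt 3 ≤ 2 := by
    nlinarith [Real.sq_sqrt (by norm_num : (0:ℝ) ≤ 3), Real.sqrt_nonneg 3]
  set c : ℝ := (2:ℝ) ^ ((m:ℝ)⁻¹) with hc
  have hm0 : (0:ℝ) < (m:ℝ) := by exact_mod_cast hm
  have hc1 : 1 < c := by
    rw [hc]
    rw [Real.one_lt_rpow_iff_of_pos (by norm_num)]
    exact Or.inl ⟨one_lt_two, by positivity⟩
  refine lt_of_lt_of_le hc1 ?_
  apply Filter.le_limsup_of_frequently_le
  · rw [Filter.frequently_atTop]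
    intro N
    refine ⟨(N+1)*m, ?_, ?_⟩
    · calc N ≤ N + 1 := Nat.le_succ N
        _ ≤ (N+1)*m := Nat.le_mul_of_pos_right _ hm
    · have htpos : 0 < (N+1)*m := Nat.mul_pos (Nat.succ_pos N) hm
      have htR : (0:ℝ) < (((N+1)*m : ℕ) : ℝ) := by exact_mod_cast htpos
      have h1 : (2:ℝ)^(N+1) ≤ ‖x ((N+1)*m)‖ := hlb (N+1)
      have hce : c = ((2:ℝ)^(N+1)) ^ ((((N+1)*m : ℕ) : ℝ)⁻¹) := by
        rw [← Real.rpow_natCast 2 (N+1), ← Real.rpow_mul (by norm_num)]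
        congr 1
        push_cast
        rw [mul_inv, ← mul_assoc, mul_inv_cancel₀ (by positivity : ((N:ℝ)+1) ≠ 0), one_mul]
      rw [hce]
      exact Real.rpow_le_rpow (by positivity) h1 (by positivity)
  · refine Filter.isBoundedUnder_of ⟨4, fun t => ?_⟩
    rcases Nat.eq_zero_or_pos t with h0 | hpos
    · subst h0; norm_num
    · have ht0 : ((t:ℝ)) ≠ 0 := by positivity
      have h2t : (2:ℝ) ≤ 2^t := by
        calc (2:ℝ) = 2^1 := (pow_one 2).symm
          _ ≤ 2^t := pow_le_pow_right₀ one_le_two hpos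
      have hle : ‖x t‖ ≤ 4^t := by
        calc ‖x t‖ ≤ 2^t * Real.sqrt 3 := hub t
          _ ≤ 2^t * 2^t := by
              have : Real.sqrt 3 ≤ 2^t := le_trans hsqrt3 h2t
              have h2tp : (0:ℝ) ≤ 2^t := by positivity
              nlinarith [Real.sqrt_nonneg 3]
          _ = 4^t := by rw [← mul_pow]; norm_num
      calc ‖x t‖ ^ ((t:ℝ)⁻¹) ≤ ((4:ℝ)^t) ^ ((t:ℝ)⁻¹) :=
            Real.rpow_le_rpow (norm_nonneg _) hle (by positivity)
        _ = 4 := by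
            rw [← Real.rpow_natCast 4 t, ← Real.rpow_mul (by norm_num),
              mul_inv_cancel₀ ht0, Real.rpow_one]

/-- Be = 2e and BAᵗe = 2e for all t; consequently every
0-homogeneous feedback σ with values in {A, B} yields a closed-loop trajectory
from e with limsup |x(t)|^(1/t) > 1. -/
theorem stmt8 :
    Bmat.mulVec eVec = ((2 : ℝ) • eVec : EuclideanSpace ℝ (Fin 3)) ∧
    (∀ t : ℕ, Bmat.mulVec ((Amat ^ t).mulVec eVec) =
      ((2 : ℝ) • eVec : EuclideanSpace ℝ (Fin 3))) ∧
    ∀ σ : EuclideanSpace ℝ (Fin 3) → Matrix (Fin 3) (Fin 3) ℝ,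
      (∀ x, σ x = Amat ∨ σ x = Bmat) →
      (∀ (c : ℝ) (x : EuclideanSpace ℝ (Fin 3)), c ≠ 0 → σ (c • x) = σ x) →
      1 < Filter.limsup (fun t : ℕ => ‖clTraj σ eVec t‖ ^ ((t : ℝ)⁻¹)) Filter.atTop := by
  refine ⟨by rw [eVec_eq]; exact B_mulVec 0,
    fun t => by rw [Apow_mulVec, eVec_eq]; exact B_mulVec t, ?_⟩
  intro σ hσ hom
  by_cases hall : ∀ m : ℕ, σ (aPow m) = Amat
  · -- always A: x t = aPow t
    have hx : ∀ t, clTraj σ eVec t = aPow t := by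
      intro t
      induction t with
      | zero => exact eVec_eq
      | succ t ih => rw [clTraj_succ, ih, hall t, A_mulVec]
    apply tail_lemma _ 1 le_rfl
    · intro t; rw [hx t]; exact norm_aPow_le t
    · intro n; rw [mul_one, hx n]; exact norm_aPow_ge n
  · push_neg at hall
    obtain ⟨m, hm⟩ := hall
    have hex : ∃ k : ℕ, σ (aPow k) = Bmat := ⟨m, (hσ _).resolve_left hm⟩
    set m₀ := Nat.find hex with hm₀def
    have hBm : σ (aPow m₀) = Bmat := Nat.find_spec hex
    have hAr : ∀ r, r < m₀ → σ (aPow r) = Amat := fun r hr =>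
      (hσ _).resolve_right (Nat.find_min hex hr)
    have h2n : ∀ n : ℕ, ((2:ℝ)^n) ≠ 0 := fun n => pow_ne_zero n two_ne_zero
    have inner : ∀ n : ℕ, clTraj σ eVec (n*(m₀+1)) = (((2:ℝ)^n) • aPow 0 : EuclideanSpace ℝ (Fin 3)) →
        ∀ r, r ≤ m₀ → clTraj σ eVec (n*(m₀+1)+r) = (((2:ℝ)^n) • aPow r : EuclideanSpace ℝ (Fin 3)) := by
      intro n h0 r hr
      induction r with
      | zero => simpa using h0
      | succ r ih =>
        have hr' : r < m₀ := Nat.lt_of_succ_le hr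
        rw [show n*(m₀+1)+(r+1) = (n*(m₀+1)+r)+1 by omega, clTraj_succ,
          ih hr'.le, hom _ _ (h2n n), hAr r hr', A_mulVec_smul]
    have key : ∀ n : ℕ, ∀ r, r ≤ m₀ →
        clTraj σ eVec (n*(m₀+1)+r) = (((2:ℝ)^n) • aPow r : EuclideanSpace ℝ (Fin 3)) := by
      intro n
      induction n with
      | zero =>
        refine inner 0 ?_
        rw [show (0:ℕ)*(m₀+1) = 0 by ring]
        show eVec = _
        rw [eVec_eq, pow_zero, one_smul]
      | succ n ihn =>
        refine inner (n+1) ?_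
        have h0 : clTraj σ eVec (n*(m₀+1)) = (((2:ℝ)^n) • aPow 0 : EuclideanSpace ℝ (Fin 3)) := by
          simpa using ihn 0 (Nat.zero_le _)
        have hmfull := inner n h0 m₀ le_rfl
        rw [show (n+1)*(m₀+1) = (n*(m₀+1)+m₀)+1 by ring, clTraj_succ, hmfull,
          hom _ _ (h2n n), hBm, B_mulVec_smul]
        rw [← pow_succ']
    have hxt : ∀ t, clTraj σ eVec t =
        (((2:ℝ)^(t/(m₀+1))) • aPow (t % (m₀+1)) : EuclideanSpace ℝ (Fin 3)) := by
      intro t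
      conv_lhs => rw [show t = (t/(m₀+1))*(m₀+1) + t % (m₀+1) from (Nat.div_add_mod' t (m₀+1)).symm]
      exact key _ _ (Nat.lt_succ_iff.mp (Nat.mod_lt t (Nat.succ_pos m₀)))
    apply tail_lemma _ (m₀+1) (Nat.succ_le_succ (Nat.zero_le _))
    · intro t
      rw [hxt t, norm_smul]
      have h1 : ‖(2:ℝ)^(t/(m₀+1))‖ = (2:ℝ)^(t/(m₀+1)) := by
        rw [Real.norm_eq_abs, abs_of_pos (by positivity)]
      rw [h1]
      calc (2:ℝ)^(t/(m₀+1)) * ‖aPow (t % (m₀+1))‖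
          ≤ (2:ℝ)^(t/(m₀+1)) * (2^(t % (m₀+1)) * Real.sqrt 3) := by
            have := norm_aPow_le (t % (m₀+1))
            have hp : (0:ℝ) < 2^(t/(m₀+1)) := by positivity
            nlinarith [norm_nonneg (aPow (t % (m₀+1)))]
        _ = (2:ℝ)^(t/(m₀+1) + t % (m₀+1)) * Real.sqrt 3 := by rw [pow_add]; ring
        _ ≤ (2:ℝ)^t * Real.sqrt 3 := by
            have hle : t/(m₀+1) + t % (m₀+1) ≤ t := by
              have h1 := Nat.div_add_mod t (m₀+1)
              have h2 : t/(m₀+1) ≤ (m₀+1)*(t/(m₀+1)) := Nat.le_mul_of_pos_left _ (Nat.succ_pos m₀)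
              exact le_trans (Nat.add_le_add_right h2 _) (le_of_eq h1)
            have := pow_le_pow_right₀ (one_le_two (α := ℝ)) hle
            nlinarith [Real.sqrt_nonneg 3]
    · intro n
      have := key n 0 (Nat.zero_le _)
      rw [show n*(m₀+1)+0 = n*(m₀+1) by omega] at this
      rw [this, norm_smul, Real.norm_eq_abs, abs_of_pos (by positivity : (0:ℝ) < 2^n)]
      have h3 : (1:ℝ) ≤ ‖aPow 0‖ := le_trans (by norm_num) (norm_aPow_ge 0)
      nlinarith [pow_pos (zero_lt_two (α := ℝ)) n]
end
end

section
/- Under the map (p,q) ↦ (4p, q) (action of A₂ on rational tangents p/q) and the map (p,q) ↦ (p−q, p+q) (action of A₁), starting from (p,q) = (0,1) and reducing by common factors at each step, all reachable coprime pairs (p,q) of positive integers satisfy: neither p nor q is congruent to 2 modulo 4. -/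
/-- Auxiliary predicate on odd parts: `R a b` holds when either `a = b`, or the
2-adic valuation of `a² - b²` is even and the pair of odd parts of
`(|a - b|, a + b)` is again good (recursively). -/
inductive R : ℕ → ℕ → Prop
  | refl (a : ℕ) : R a a
  | step (a b i j x y : ℕ) (hx : Odd x) (hy : Odd y)
      (hsum : a + b = 2 ^ i * x)
      (hdiff : a + 2 ^ j * y = b ∨ b + 2 ^ j * y = a)
      (hij : Even (i + j)) (h : R y x) : R a b

theorem R.symm {a b : ℕ} (h : R a b) : R b a := by
  cases h with
  | refl a => exact .refl a
  | step a b i j x y hx hy hsum hdiff hij h =>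
    exact .step b a i j x y hx hy (by omega) hdiff.symm hij h

theorem pow_mul_odd_inj {a b : ℕ} (ha : Odd a) (hb : Odd b) :
    ∀ {i j : ℕ}, 2 ^ i * a = 2 ^ j * b → i = j ∧ a = b := by
  intro i
  induction i with
  | zero =>
    intro j hj
    cases j with
    | zero => simpa using hj
    | succ s =>
      exfalso
      simp only [pow_zero, one_mul] at hj
      rcases ha with ⟨k, hk⟩
      have h2 : a = 2 * (2 ^ s * b) := by rw [hj, pow_succ]; ring
      omega
  | succ i ih =>
    intro j hj
    cases j with
    | zero =>
      exfalso
      simp only [pow_zero, one_mul] at hj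
      rcases hb with ⟨k, hk⟩
      have h2 : b = 2 * (2 ^ i * a) := by rw [← hj, pow_succ]; ring
      omega
    | succ s =>
      have h2 : 2 * (2 ^ i * a) = 2 * (2 ^ s * b) := by
        rw [← mul_assoc, ← mul_assoc, mul_comm 2 (2 ^ i), mul_comm 2 (2 ^ s),
          ← pow_succ, ← pow_succ]
        exact hj
      have h3 := ih (Nat.eq_of_mul_eq_mul_left (by norm_num) h2)
      exact ⟨by omega, h3.2⟩

theorem odd_ne_zero {c : ℕ} (hc : Odd c) : c ≠ 0 := by
  rcases hc with ⟨k, hk⟩; omega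

theorem R_scale_up {c : ℕ} (hc : Odd c) {a b : ℕ} (h : R a b) :
    R (c * a) (c * b) := by
  induction h with
  | refl t => exact .refl (c * t)
  | step a b i j x y hx hy hsum hdiff hij h ih =>
    refine .step (c * a) (c * b) i j (c * x) (c * y)
      (Nat.odd_mul.mpr ⟨hc, hx⟩) (Nat.odd_mul.mpr ⟨hc, hy⟩) ?_ ?_ hij ih
    · calc c * a + c * b = c * (a + b) := by ring
        _ = c * (2 ^ i * x) := by rw [hsum]
        _ = 2 ^ i * (c * x) := by ring
    · rcases hdiff with h' | h'
      · left
        calc c * a + 2 ^ j * (c * y) = c * (a + 2 ^ j * y) := by ring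
          _ = c * b := by rw [h']
      · right
        calc c * b + 2 ^ j * (c * y) = c * (b + 2 ^ j * y) := by ring
          _ = c * a := by rw [h']

theorem R_scale_down {c : ℕ} (hc : Odd c) :
    ∀ {u v : ℕ}, R u v → ∀ {a b : ℕ}, u = c * a → v = c * b → R a b := by
  intro u v h
  induction h with
  | refl t =>
    intro a b ha hb
    have hc0 : 0 < c := Nat.pos_of_ne_zero (odd_ne_zero hc)
    have hab : a = b := by
      have : c * a = c * b := by rw [← ha, ← hb]
      exact Nat.eq_of_mul_eq_mul_left hc0 this
    rw [hab]; exact .refl b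
  | step u v i j x y hx hy hsum hdiff hij h ih =>
    intro a b ha hb
    subst ha hb
    have hc0 : 0 < c := Nat.pos_of_ne_zero (odd_ne_zero hc)
    have hcop : ∀ k : ℕ, Nat.Coprime c (2 ^ k) := fun k =>
      Nat.Coprime.pow_right _ (Nat.coprime_two_right.mpr hc)
    -- extract c from x
    have hdx : c ∣ 2 ^ i * x := ⟨a + b, by rw [← hsum]; ring⟩
    obtain ⟨x', rfl⟩ := (hcop i).dvd_of_dvd_mul_left hdx
    have hsum' : a + b = 2 ^ i * x' := by
      have h1 : c * (a + b) = c * (2 ^ i * x') := by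
        calc c * (a + b) = c * a + c * b := by ring
          _ = 2 ^ i * (c * x') := hsum
          _ = c * (2 ^ i * x') := by ring
      exact Nat.eq_of_mul_eq_mul_left hc0 h1
    -- extract c from y
    have hdy : c ∣ 2 ^ j * y := by
      rcases hdiff with h' | h'
      · have he : 2 ^ j * y = c * b - c * a := by omega
        rw [he]
        exact Nat.dvd_sub (dvd_mul_right c b) (dvd_mul_right c a)
      · have he : 2 ^ j * y = c * a - c * b := by omega
        rw [he]
        exact Nat.dvd_sub (dvd_mul_right c a) (dvd_mul_right c b)
    obtain ⟨y', rfl⟩ := (hcop j).dvd_of_dvd_mul_left hdy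
    have hdiff' : a + 2 ^ j * y' = b ∨ b + 2 ^ j * y' = a := by
      rcases hdiff with h' | h'
      · left
        have h1 : c * (a + 2 ^ j * y') = c * b := by
          calc c * (a + 2 ^ j * y') = c * a + 2 ^ j * (c * y') := by ring
            _ = c * b := h'
        exact Nat.eq_of_mul_eq_mul_left hc0 h1
      · right
        have h1 : c * (b + 2 ^ j * y') = c * a := by
          calc c * (b + 2 ^ j * y') = c * b + 2 ^ j * (c * y') := by ring
            _ = c * a := h'
        exact Nat.eq_of_mul_eq_mul_left hc0 h1
    exact .step a b i j x' y' (Nat.odd_mul.mp hx).2 (Nat.odd_mul.mp hy).2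
      hsum' hdiff' hij (ih rfl rfl)

/-- The invariant on (absolute values of) pairs: one coordinate vanishes, or
the 2-adic valuations differ by an even number and the odd parts satisfy `R`. -/
def NInv (m n : ℕ) : Prop :=
  m = 0 ∨ n = 0 ∨
    ∃ i j a b : ℕ, Odd a ∧ Odd b ∧ m = 2 ^ i * a ∧ n = 2 ^ j * b ∧
      Even (i + j) ∧ R a b

theorem NInv.symm {m n : ℕ} (h : NInv m n) : NInv n m := by
  rcases h with h | h | ⟨i, j, a, b, ha, hb, hm, hn, hij, hR⟩
  · exact Or.inr (Or.inl h)
  · exact Or.inl h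
  · exact Or.inr (Or.inr ⟨j, i, b, a, hb, ha, hn, hm, by rwa [Nat.add_comm], hR.symm⟩)

theorem NInv_diag (n : ℕ) : NInv n n := by
  rcases Nat.eq_zero_or_pos n with h | h
  · exact Or.inl h
  obtain ⟨k, c, hc, hn⟩ := Nat.exists_eq_two_pow_mul_odd h.ne'
  exact Or.inr (Or.inr ⟨k, k, c, c, hc, hc, hn, hn, ⟨k, rfl⟩, .refl c⟩)

theorem NInv_key {m n : ℕ} (h : NInv m n) :
    NInv (m + n) ((m - n) + (n - m)) := by
  rcases h with h | h | ⟨i, j, a, b, ha, hb, hm, hn, hij, hR⟩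
  · subst h; simpa using NInv_diag n
  · subst h; simpa using NInv_diag m
  subst hm hn
  rcases lt_trichotomy i j with hlt | rfl | hlt
  · -- i < j
    obtain ⟨k, hjik, hk1⟩ : ∃ k, j = i + k ∧ 1 ≤ k := ⟨j - i, by omega, by omega⟩
    obtain ⟨C, hC⟩ : ∃ C, C = 2 ^ k * b := ⟨_, rfl⟩
    have hCdef : 2 ^ j * b = 2 ^ i * C := by
      rw [hC, hjik, pow_add]; ring
    have h2k : 2 ^ (k - 1) * 2 = 2 ^ k := by
      rw [← pow_succ, Nat.sub_add_cancel hk1]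
    have hC2 : C = 2 * (2 ^ (k - 1) * b) := by
      rw [hC, ← h2k]; ring
    have hkk : 2 ^ (k + 1) * b = 2 * C := by
      rw [hC, pow_succ]; ring
    obtain ⟨t, ht⟩ := id ha
    have hkeven : ∃ w, k = 2 * w := by
      rcases hij with ⟨w, hw⟩; exact ⟨w - i, by omega⟩
    have haC : a ≠ C := by omega
    have hoddsum : Odd (a + C) := ⟨t + 2 ^ (k - 1) * b, by omega⟩
    have hsum_eq : 2 ^ i * a + 2 ^ j * b = 2 ^ i * (a + C) := by
      rw [hCdef]; ring
    rcases Nat.lt_or_ge C a with hgt | hge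
    · -- a > C
      obtain ⟨u, hau⟩ : ∃ u, a = C + u := ⟨a - C, by omega⟩
      have hoddu : Odd u := ⟨t - 2 ^ (k - 1) * b, by omega⟩
      have hRnew : R (a + C) u := by
        refine .step (a + C) u 1 (k + 1) a b ha hb (by rw [pow_one]; omega)
          (Or.inr (by omega)) ?_ hR.symm
        · obtain ⟨w, hw⟩ := hkeven; exact ⟨w + 1, by omega⟩
      refine Or.inr (Or.inr ⟨i, i, a + C, u, hoddsum, hoddu, hsum_eq, ?_,
        ⟨i, rfl⟩, hRnew⟩)
      have e1 : 2 ^ i * a = 2 ^ i * C + 2 ^ i * u := by rw [hau]; ring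
      have e2 : 2 ^ j * b = 2 ^ i * C := hCdef
      omega
    · -- a < C
      have hlt' : a < C := by omega
      obtain ⟨u, hau⟩ : ∃ u, C = a + u := ⟨C - a, by omega⟩
      have hoddu : Odd u := ⟨2 ^ (k - 1) * b - t - 1, by omega⟩
      have hRnew : R (a + C) u := by
        refine .step (a + C) u (k + 1) 1 b a hb ha (by rw [hkk]; omega)
          (Or.inr (by rw [pow_one]; omega)) ?_ hR
        · obtain ⟨w, hw⟩ := hkeven; exact ⟨w + 1, by omega⟩
      refine Or.inr (Or.inr ⟨i, i, a + C, u, hoddsum, hoddu, hsum_eq, ?_,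
        ⟨i, rfl⟩, hRnew⟩)
      have e1 : 2 ^ i * C = 2 ^ i * a + 2 ^ i * u := by rw [hau]; ring
      have e2 : 2 ^ j * b = 2 ^ i * C := hCdef
      omega
  · -- i = j
    by_cases hab : a = b
    · subst hab
      exact Or.inr (Or.inl (by omega))
    · cases hR with
      | refl a => exact absurd rfl hab
      | step _ _ i' j' x y hx hy hsum hdiff hij2 h' =>
        have hpow : 2 ^ (i + j') * y = 2 ^ i * (2 ^ j' * y) := by
          rw [pow_add]; ring
        refine Or.inr (Or.inr ⟨i + i', i + j', x, y, hx, hy, ?_, ?_,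
          ?_, h'.symm⟩)
        · calc 2 ^ i * a + 2 ^ i * b = 2 ^ i * (a + b) := by ring
            _ = 2 ^ i * (2 ^ i' * x) := by rw [hsum]
            _ = 2 ^ (i + i') * x := by rw [pow_add]; ring
        · rw [hpow]
          rcases hdiff with h2 | h2
          · have e1 : 2 ^ i * b = 2 ^ i * a + 2 ^ i * (2 ^ j' * y) := by
              rw [← h2]; ring
            omega
          · have e1 : 2 ^ i * a = 2 ^ i * b + 2 ^ i * (2 ^ j' * y) := by
              rw [← h2]; ring
            omega
        · obtain ⟨w, hw⟩ := hij2; exact ⟨w + i, by omega⟩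
  · -- i > j
    obtain ⟨k, hjik, hk1⟩ : ∃ k, i = j + k ∧ 1 ≤ k := ⟨i - j, by omega, by omega⟩
    obtain ⟨C, hC⟩ : ∃ C, C = 2 ^ k * a := ⟨_, rfl⟩
    have hCdef : 2 ^ i * a = 2 ^ j * C := by
      rw [hC, hjik, pow_add]; ring
    have h2k : 2 ^ (k - 1) * 2 = 2 ^ k := by
      rw [← pow_succ, Nat.sub_add_cancel hk1]
    have hC2 : C = 2 * (2 ^ (k - 1) * a) := by
      rw [hC, ← h2k]; ring
    have hkk : 2 ^ (k + 1) * a = 2 * C := by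
      rw [hC, pow_succ]; ring
    obtain ⟨t, ht⟩ := id hb
    have hkeven : ∃ w, k = 2 * w := by
      rcases hij with ⟨w, hw⟩; exact ⟨w - j, by omega⟩
    have hbC : b ≠ C := by omega
    have hoddsum : Odd (C + b) := ⟨t + 2 ^ (k - 1) * a, by omega⟩
    have hsum_eq : 2 ^ i * a + 2 ^ j * b = 2 ^ j * (C + b) := by
      rw [hCdef]; ring
    rcases Nat.lt_or_ge C b with hgt | hge
    · -- b > C
      obtain ⟨u, hau⟩ : ∃ u, b = C + u := ⟨b - C, by omega⟩
      have hoddu : Odd u := ⟨t - 2 ^ (k - 1) * a, by omega⟩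
      have hRnew : R (C + b) u := by
        refine .step (C + b) u 1 (k + 1) b a hb ha (by rw [pow_one]; omega)
          (Or.inr (by omega)) ?_ hR
        · obtain ⟨w, hw⟩ := hkeven; exact ⟨w + 1, by omega⟩
      refine Or.inr (Or.inr ⟨j, j, C + b, u, hoddsum, hoddu, hsum_eq, ?_,
        ⟨j, rfl⟩, hRnew⟩)
      have e1 : 2 ^ j * b = 2 ^ j * C + 2 ^ j * u := by rw [hau]; ring
      have e2 : 2 ^ i * a = 2 ^ j * C := hCdef
      omega
    · -- b < C
      have hlt' : b < C := by omega
      obtain ⟨u, hau⟩ : ∃ u, C = b + u := ⟨C - b, by omega⟩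
      have hoddu : Odd u := ⟨2 ^ (k - 1) * a - t - 1, by omega⟩
      have hRnew : R (C + b) u := by
        refine .step (C + b) u (k + 1) 1 a b ha hb (by rw [hkk]; omega)
          (Or.inr (by rw [pow_one]; omega)) ?_ hR.symm
        · obtain ⟨w, hw⟩ := hkeven; exact ⟨w + 1, by omega⟩
      refine Or.inr (Or.inr ⟨j, j, C + b, u, hoddsum, hoddu, hsum_eq, ?_,
        ⟨j, rfl⟩, hRnew⟩)
      have e1 : 2 ^ j * C = 2 ^ j * b + 2 ^ j * u := by rw [hau]; ring
      have e2 : 2 ^ i * a = 2 ^ j * C := hCdef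
      omega

theorem NInv_four {m n : ℕ} (h : NInv m n) : NInv (4 * m) n := by
  rcases h with h | h | ⟨i, j, a, b, ha, hb, hm, hn, hij, hR⟩
  · exact Or.inl (by omega)
  · exact Or.inr (Or.inl h)
  · refine Or.inr (Or.inr ⟨i + 2, j, a, b, ha, hb, ?_, hn, by rcases hij with ⟨w, hw⟩; exact ⟨w + 1, by omega⟩, hR⟩)
    rw [hm, pow_add]; ring

theorem NInv_reduce {c m n : ℕ} (hc : c ≠ 0) (h : NInv (c * m) (c * n)) :
    NInv m n := by
  rcases h with h | h | ⟨i, j, a, b, ha, hb, hm, hn, hij, hR⟩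
  · exact Or.inl (by simpa [hc] using h)
  · exact Or.inr (Or.inl (by simpa [hc] using h))
  · rcases Nat.eq_zero_or_pos m with h0 | hm0
    · exact Or.inl h0
    rcases Nat.eq_zero_or_pos n with h0 | hn0
    · exact Or.inr (Or.inl h0)
    obtain ⟨k, d, hd, hcd⟩ := Nat.exists_eq_two_pow_mul_odd hc
    obtain ⟨i₁, a₁, ha₁, hma⟩ := Nat.exists_eq_two_pow_mul_odd hm0.ne'
    obtain ⟨j₁, b₁, hb₁, hnb⟩ := Nat.exists_eq_two_pow_mul_odd hn0.ne'
    have e1 : 2 ^ i * a = 2 ^ (k + i₁) * (d * a₁) := by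
      rw [← hm, hcd, hma, pow_add]; ring
    have e2 : 2 ^ j * b = 2 ^ (k + j₁) * (d * b₁) := by
      rw [← hn, hcd, hnb, pow_add]; ring
    obtain ⟨hi, hadal⟩ := pow_mul_odd_inj ha (Nat.odd_mul.mpr ⟨hd, ha₁⟩) e1
    obtain ⟨hj, hbdbl⟩ := pow_mul_odd_inj hb (Nat.odd_mul.mpr ⟨hd, hb₁⟩) e2
    refine Or.inr (Or.inr ⟨i₁, j₁, a₁, b₁, ha₁, hb₁, hma, hnb,
      by rcases hij with ⟨w, hw⟩; exact ⟨w - k, by omega⟩, ?_⟩)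
    exact R_scale_down hd (hadal ▸ hbdbl ▸ hR) rfl rfl

theorem NInv_key_int (p q : ℤ) (h : NInv p.natAbs q.natAbs) :
    NInv (p - q).natAbs (p + q).natAbs := by
  have h2 := NInv_key h
  have hsplit :
      ((p - q).natAbs = p.natAbs + q.natAbs ∧
        (p + q).natAbs = (p.natAbs - q.natAbs) + (q.natAbs - p.natAbs)) ∨
      ((p - q).natAbs = (p.natAbs - q.natAbs) + (q.natAbs - p.natAbs) ∧
        (p + q).natAbs = p.natAbs + q.natAbs) := by omega
  rcases hsplit with ⟨e1, e2⟩ | ⟨e1, e2⟩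
  · rw [e1, e2]; exact h2
  · rw [e1, e2]; exact h2.symm

/-- Reachable (integer) pairs representing tangents of lines in the orbit of the
x₁-axis: starting from (0,1), one may apply the action of A₂ on tangents
((p,q) ↦ (4p,q)) or of its inverse ((p,q) ↦ (p,4q)), the action of A₁
((p,q) ↦ (p−q, p+q)) or of its inverse ((p,q) ↦ (p+q, q−p)), reduce by a
common factor, or change sign (symmetry with respect to the x₁-axis). -/
inductive Reach : ℤ → ℤ → Prop
  | base : Reach 0 1
  | a2 (p q : ℤ) : Reach p q → Reach (4 * p) q
  | a2inv (p q : ℤ) : Reach p q → Reach p (4 * q)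
  | a1 (p q : ℤ) : Reach p q → Reach (p - q) (p + q)
  | a1inv (p q : ℤ) : Reach p q → Reach (p + q) (q - p)
  | reduce (d p q : ℤ) (hd : d ≠ 0) : Reach (d * p) (d * q) → Reach p q
  | sign (p q : ℤ) : Reach p q → Reach (-p) q

theorem reach_ninv {p q : ℤ} (h : Reach p q) : NInv p.natAbs q.natAbs := by
  induction h with
  | base => exact Or.inl rfl
  | a2 p q h ih =>
    have e : (4 * p).natAbs = 4 * p.natAbs := by
      rw [Int.natAbs_mul]; rfl
    rw [e]; exact NInv_four ih
  | a2inv p q h ih =>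
    have e : (4 * q).natAbs = 4 * q.natAbs := by
      rw [Int.natAbs_mul]; rfl
    rw [e]; exact (NInv_four ih.symm).symm
  | a1 p q h ih => exact NInv_key_int p q ih
  | a1inv p q h ih =>
    have h1 := (NInv_key_int q p ih.symm).symm
    rwa [add_comm q p] at h1
  | reduce d p q hd h ih =>
    refine NInv_reduce (c := d.natAbs) (by simpa using hd) ?_
    rwa [← Int.natAbs_mul, ← Int.natAbs_mul]
  | sign p q h ih => simpa using ih

/-- every reachable coprime pair (p,q) of positive integers has
neither component congruent to 2 modulo 4. -/
theorem stmt15 (p q : ℤ) (h : Reach p q) (hcop : IsCoprime p q)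
    (hp : 0 < p) (hq : 0 < q) :
    p % 4 ≠ 2 ∧ q % 4 ≠ 2 := by
  have hni := reach_ninv h
  have hnot2 : ¬ ((2 : ℤ) ∣ p ∧ (2 : ℤ) ∣ q) := by
    rintro ⟨h1, h2⟩
    have hu := hcop.isUnit_of_dvd' h1 h2
    rw [Int.isUnit_iff] at hu
    omega
  rcases hni with h0 | h0 | ⟨i, j, a, b, ha, hb, hm, hn, hij, -⟩
  · omega
  · omega
  obtain ⟨s, hs⟩ := id ha
  obtain ⟨t, ht⟩ := id hb
  obtain ⟨w, hw⟩ := id hij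
  constructor
  · intro hmod
    -- 2 ∣ p, ¬ 4 ∣ p, so i = 1
    have hi1 : i = 1 := by
      rcases i with _ | _ | i2
      · -- i = 0 : p odd
        simp only [pow_zero, one_mul] at hm
        omega
      · rfl
      · -- i ≥ 2 : 4 ∣ p
        exfalso
        have e4 : p.natAbs = 4 * (2 ^ i2 * a) := by
          rw [hm, pow_succ, pow_succ]; ring
        omega
    subst hi1
    -- j is odd, hence ≥ 1, hence q is even
    have hj1 : 1 ≤ j := by omega
    have h2k : 2 ^ (j - 1) * 2 = 2 ^ j := by
      rw [← pow_succ, Nat.sub_add_cancel hj1]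
    have e2 : q.natAbs = 2 * (2 ^ (j - 1) * b) := by
      rw [hn, ← h2k]; ring
    exact hnot2 ⟨by omega, by omega⟩
  · intro hmod
    have hj1 : j = 1 := by
      rcases j with _ | _ | j2
      · simp only [pow_zero, one_mul] at hn
        omega
      · rfl
      · exfalso
        have e4 : q.natAbs = 4 * (2 ^ j2 * b) := by
          rw [hn, pow_succ, pow_succ]; ring
        omega
    subst hj1
    have hi1 : 1 ≤ i := by omega
    have h2k : 2 ^ (i - 1) * 2 = 2 ^ i := by
      rw [← pow_succ, Nat.sub_add_cancel hi1]
    have e2 : p.natAbs = 2 * (2 ^ (i - 1) * a) := by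
      rw [hm, ← h2k]; ring
    exact hnot2 ⟨by omega, by omega⟩
end

section
/- Assume ρ̃'(M) < ∞ and let λ* = ρ̃(M). Then there exist a unit vector x₀ ∈ ℝ^d and a switching sequence σ₀ such that |x_{σ₀,x₀}(t)| ≤ λ*ᵗ |x₀| for all t ∈ ℕ (i.e., the stabilization rate λ* is attained with constant M = 1 for some initial point). -/
open Matrix Filter

noncomputable section

lemma traj_smul {d : ℕ} (σ : ℕ → Matrix (Fin d) (Fin d) ℝ) (c : ℝ)
    (x : EuclideanSpace ℝ (Fin d)) : ∀ t, traj σ (c • x) t = c • traj σ x t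
  | 0 => rfl
  | t + 1 => by
    show (WithLp.toLp 2 ((σ (t+1)).mulVec (traj σ (c • x) t)) : EuclideanSpace ℝ (Fin d)) = _
    rw [traj_smul σ c x t]
    show WithLp.toLp 2 ((σ (t+1)).mulVec (WithLp.ofLp (c • traj σ x t))) =
      c • WithLp.toLp 2 ((σ (t+1)).mulVec (WithLp.ofLp (traj σ x t)))
    rw [WithLp.ofLp_smul, Matrix.mulVec_smul, WithLp.toLp_smul]

lemma traj_shift {d : ℕ} (σ : ℕ → Matrix (Fin d) (Fin d) ℝ)
    (x : EuclideanSpace ℝ (Fin d)) (s : ℕ) :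
    ∀ t, traj (fun u => σ (s + u)) (traj σ x s) t = traj σ x (s + t)
  | 0 => rfl
  | t + 1 => by
    show (WithLp.toLp 2 ((σ (s + (t+1))).mulVec (traj (fun u => σ (s+u)) (traj σ x s) t)) :
        EuclideanSpace ℝ (Fin d)) = traj σ x (s + (t+1))
    rw [traj_shift σ x s t, show s + (t+1) = (s+t) + 1 by ring]
    rfl

lemma continuous_traj {d : ℕ} (t : ℕ) :
    Continuous fun p : (EuclideanSpace ℝ (Fin d)) × (ℕ → Matrix (Fin d) (Fin d) ℝ) =>
      traj p.2 p.1 t := by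
  induction t with
  | zero => exact continuous_fst
  | succ t ih =>
    show Continuous fun p : (EuclideanSpace ℝ (Fin d)) × (ℕ → Matrix (Fin d) (Fin d) ℝ) =>
      (WithLp.toLp 2 ((p.2 (t+1)).mulVec (WithLp.ofLp (traj p.2 p.1 t))) : EuclideanSpace ℝ (Fin d))
    exact (PiLp.continuous_toLp 2 _).comp (Continuous.matrix_mulVec
      ((continuous_apply (t+1)).comp continuous_snd) ((PiLp.continuous_ofLp 2 _).comp ih))

instance matrixFirstCountable {d : ℕ} :
    FirstCountableTopology (Matrix (Fin d) (Fin d) ℝ) :=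
  (inferInstance : FirstCountableTopology (Fin d → Fin d → ℝ))

set_option maxHeartbeats 1000000 in
/-- if ρ̃'(M) < ∞, i.e. there are λ ≥ 0 and a uniform constant
C > 0 such that every initial point admits a trajectory with
|x(t)| ≤ C λᵗ |x|, then the rate λ* = ρ̃(M) is attained with constant 1 for
some unit initial vector: there exist x₀ with ‖x₀‖ = 1 and a switching
sequence σ₀ with |x_{σ₀,x₀}(t)| ≤ λ*ᵗ |x₀| for all t. -/
theorem stmt18 {d : ℕ} (hd : 0 < d) (M : Set (Matrix (Fin d) (Fin d) ℝ))
    (hM : IsCompact M) (hne : M.Nonempty)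
    (hfin : ∃ lam C : ℝ, 0 ≤ lam ∧ 0 < C ∧
      ∀ x : EuclideanSpace ℝ (Fin d), ∃ σ : ℕ → Matrix (Fin d) (Fin d) ℝ,
        (∀ t, σ t ∈ M) ∧ ∀ t : ℕ, ‖traj σ x t‖ ≤ C * lam ^ t * ‖x‖) :
    ∃ x₀ : EuclideanSpace ℝ (Fin d), ‖x₀‖ = 1 ∧
      ∃ σ₀ : ℕ → Matrix (Fin d) (Fin d) ℝ, (∀ t, σ₀ t ∈ M) ∧
        ∀ t : ℕ, ‖traj σ₀ x₀ t‖ ≤ stabRad M ^ t * ‖x₀‖ := by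
  classical
  obtain ⟨lam, C, hlam0, hC0, hall⟩ := hfin
  set E := EuclideanSpace ℝ (Fin d)
  -- the set defining stabRadAt
  set S : E → Set ℝ := fun x => {l : ℝ | 0 ≤ l ∧ ∃ σ : ℕ → Matrix (Fin d) (Fin d) ℝ,
    (∀ t, σ t ∈ M) ∧ ∃ C > 0, ∀ t : ℕ, ‖traj σ x t‖ ≤ C * l ^ t * ‖x‖} with hS
  have hSne : ∀ x : E, lam ∈ S x := by
    intro x
    obtain ⟨σ, hσ, hb⟩ := hall x
    exact ⟨hlam0, σ, hσ, C, hC0, hb⟩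
  have hSbdd : ∀ x : E, BddBelow (S x) := fun x => ⟨0, fun l hl => hl.1⟩
  have hAt_nonneg : ∀ x : E, 0 ≤ stabRadAt M x := fun x =>
    le_csInf ⟨lam, hSne x⟩ fun l hl => hl.1
  have hAt_le : ∀ x : E, stabRadAt M x ≤ lam := fun x => csInf_le (hSbdd x) (hSne x)
  have hbddA : BddAbove (Set.range fun x : E => stabRadAt M x) :=
    ⟨lam, by rintro r ⟨x, rfl⟩; exact hAt_le x⟩
  have hAt_le_rad : ∀ x : E, stabRadAt M x ≤ stabRad M := fun x => le_ciSup hbddA x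
  set lS := stabRad M with hlS
  have hlS0 : 0 ≤ lS := le_trans (hAt_nonneg 0) (hAt_le_rad 0)
  -- key step: for every μ > lS and ε > 0, a unit vector with trajectory ≤ (1+ε) μ^t
  have key : ∀ μ ε : ℝ, lS < μ → 0 < ε →
      ∃ y : E, ‖y‖ = 1 ∧ ∃ σ : ℕ → Matrix (Fin d) (Fin d) ℝ, (∀ t, σ t ∈ M) ∧
        ∀ t : ℕ, ‖traj σ y t‖ ≤ (1 + ε) * μ ^ t := by
    intro μ ε hμ hε
    have hμ0 : 0 < μ := lt_of_le_of_lt hlS0 hμ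
    -- start from an arbitrary unit vector
    set x : E := EuclideanSpace.single (⟨0, hd⟩ : Fin d) (1 : ℝ) with hx
    have hxnorm : ‖x‖ = 1 := by rw [hx, EuclideanSpace.norm_single]; exact norm_one
    have hinf : stabRadAt M x < μ := lt_of_le_of_lt (hAt_le_rad x) hμ
    obtain ⟨ν, hνS, hνμ⟩ := exists_lt_of_csInf_lt ⟨lam, hSne x⟩ hinf
    obtain ⟨hν0, σ, hσM, D, hD0, hDb⟩ := hνS
    -- the sup of ‖x(t)‖/μ^t
    set g : ℕ → ℝ := fun t => ‖traj σ x t‖ / μ ^ t with hg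
    have hgle : ∀ t, g t ≤ D := by
      intro t
      have h1 : ‖traj σ x t‖ ≤ D * ν ^ t := by
        have := hDb t; rwa [hxnorm, mul_one] at this
      have h2 : ν ^ t ≤ μ ^ t := pow_le_pow_left₀ hν0 hνμ.le t
      have h3 : (0:ℝ) < μ ^ t := pow_pos hμ0 t
      rw [hg, div_le_iff₀ h3]
      nlinarith
    have hbg : BddAbove (Set.range g) := ⟨D, by rintro r ⟨t, rfl⟩; exact hgle t⟩
    set Sg := ⨆ t, g t with hSg
    have hSg1 : 1 ≤ Sg := by
      have : g 0 ≤ Sg := le_ciSup hbg 0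
      simpa [hg, show traj σ x 0 = x from rfl, hxnorm] using this
    have hSg0 : 0 < Sg := lt_of_lt_of_le one_pos hSg1
    have hdiv : Sg / (1 + ε) < Sg := div_lt_self hSg0 (by linarith)
    obtain ⟨s, hs⟩ := exists_lt_of_lt_ciSup hdiv
    have hs' : Sg < (1 + ε) * g s := by
      rw [div_lt_iff₀ (by linarith : (0:ℝ) < 1 + ε)] at hs
      linarith [hs]
    have hgs0 : 0 < g s := by
      have : (0:ℝ) < (1 + ε) * g s := lt_of_le_of_lt hSg0.le hs'
      nlinarith
    have hxs0 : 0 < ‖traj σ x s‖ := by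
      have h3 : (0:ℝ) < μ ^ s := pow_pos hμ0 s
      have : g s * μ ^ s = ‖traj σ x s‖ := div_mul_cancel₀ _ h3.ne'
      nlinarith
    refine ⟨(‖traj σ x s‖)⁻¹ • traj σ x s, ?_, fun u => σ (s + u), fun t => hσM (s+t), ?_⟩
    · rw [norm_smul, norm_inv, norm_norm, inv_mul_cancel₀ hxs0.ne']
    · intro t
      have hshift : traj (fun u => σ (s + u)) ((‖traj σ x s‖)⁻¹ • traj σ x s) t
          = (‖traj σ x s‖)⁻¹ • traj σ x (s + t) := by
        rw [traj_smul, traj_shift]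
      rw [hshift, norm_smul, norm_inv, norm_norm]
      have hst : ‖traj σ x (s+t)‖ ≤ Sg * (μ ^ s * μ ^ t) := by
        have h1 : g (s+t) ≤ Sg := le_ciSup hbg (s+t)
        have h3 : (0:ℝ) < μ ^ (s+t) := pow_pos hμ0 (s+t)
        have h4 : g (s+t) * μ ^ (s+t) = ‖traj σ x (s+t)‖ := div_mul_cancel₀ _ h3.ne'
        rw [← pow_add]
        nlinarith
      have hxs : ‖traj σ x s‖ = g s * μ ^ s := (div_mul_cancel₀ _ (pow_pos hμ0 s).ne').symm
      rw [inv_mul_le_iff₀ hxs0, hxs]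
      have hμs : (0:ℝ) < μ ^ s := pow_pos hμ0 s
      have hμt : (0:ℝ) < μ ^ t := pow_pos hμ0 t
      calc ‖traj σ x (s+t)‖ ≤ Sg * (μ ^ s * μ ^ t) := hst
        _ ≤ ((1 + ε) * g s) * (μ ^ s * μ ^ t) := mul_le_mul_of_nonneg_right hs'.le (by positivity)
        _ = g s * μ ^ s * ((1 + ε) * μ ^ t) := by ring
  -- apply key with μ = lS + 1/(n+1), ε = 1/(n+1)
  have hkn : ∀ n : ℕ, ∃ y : E, ‖y‖ = 1 ∧ ∃ σ : ℕ → Matrix (Fin d) (Fin d) ℝ,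
      (∀ t, σ t ∈ M) ∧ ∀ t : ℕ, ‖traj σ y t‖ ≤ (1 + 1/(n+1)) * (lS + 1/(n+1)) ^ t := by
    intro n
    have hn : (0:ℝ) < 1/(n+1) := by positivity
    exact key (lS + 1/(n+1)) (1/(n+1)) (by linarith) hn
  choose y hy σs hσs hb using hkn
  -- compactness
  set K : Set (E × (ℕ → Matrix (Fin d) (Fin d) ℝ)) :=
    (Metric.sphere (0:E) 1) ×ˢ (Set.univ.pi fun _ : ℕ => M) with hK
  have hKc : IsCompact K := (isCompact_sphere (0:E) 1).prod
    (isCompact_univ_pi fun _ => hM)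
  have hmem : ∀ n, (y n, σs n) ∈ K := by
    intro n
    refine ⟨mem_sphere_zero_iff_norm.2 (hy n), fun t _ => hσs n t⟩
  obtain ⟨⟨x₀, σ₀⟩, haK, φ, hφ, hconv⟩ := hKc.tendsto_subseq hmem
  refine ⟨x₀, mem_sphere_zero_iff_norm.1 haK.1, σ₀, fun t => haK.2 t (Set.mem_univ t), ?_⟩
  intro t
  rw [mem_sphere_zero_iff_norm.1 haK.1, mul_one]
  -- limits
  have hc : Tendsto (fun n : ℕ => (1:ℝ)/(φ n + 1)) atTop (nhds 0) :=
    tendsto_one_div_add_atTop_nhds_zero_nat.comp hφ.tendsto_atTop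
  have h2 : Tendsto (fun n : ℕ => (1 + 1/(φ n + 1)) * (lS + 1/(φ n + 1)) ^ t) atTop
      (nhds ((1 + 0) * (lS + 0) ^ t)) :=
    ((tendsto_const_nhds.add hc).mul ((tendsto_const_nhds.add hc).pow t))
  have h1 : Tendsto (fun n : ℕ => ‖traj (σs (φ n)) (y (φ n)) t‖) atTop
      (nhds ‖traj σ₀ x₀ t‖) := by
    have hT : Tendsto (fun n : ℕ => traj (σs (φ n)) (y (φ n)) t) atTop
        (nhds (traj σ₀ x₀ t)) :=
      ((continuous_traj t).tendsto ((x₀, σ₀) : E × (ℕ → Matrix (Fin d) (Fin d) ℝ))).comp hconv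
    exact hT.norm
  have := le_of_tendsto_of_tendsto' h1 h2 (fun n => by
    have := hb (φ n) t
    simpa using this)
  simpa using this
end
end
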